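/- arXiv:2410.06378 — 5 statements merged into one kernel-verified Lean document; each statement's English description precedes it below -/
import Mathlib

section
/- For every p ∈ [1,∞], all d, W, L, b ∈ ℕ with W ≥ d, and every B ∈ ℝ_+ with B ≥ 1, the set R_{[−B,B]∩2^{−b}ℤ}(d,W,L) of realizations of ReLU networks whose weights all lie in [−B,B] ∩ 2^{−b}ℤ is an (L (W+1)^L B^{L−1} 2^{−b})-covering of R(d,W,L,B) with respect to the L^p([0,1]^d)-norm; that is, for every f ∈ R(d,W,L,B) there exists g ∈ R_{[−B,B]∩2^{−b}ℤ}(d,W,L) with ‖f − g‖_{L^p([0,1]^d)} ≤ L (W+1)^L B^{L−1} 2^{−b}. -/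
open MeasureTheory ProbabilityTheory ENNReal

noncomputable section

/-- A ReLU network configuration with input dimension `d`:
a finite sequence of matrix–vector pairs `(A_i, b_i)`, `i = 0, …, depth − 1`. -/
structure ReLUNet (d : ℕ) where
  depth : ℕ
  depth_pos : 0 < depth
  width : ℕ → ℕ
  width_in : width 0 = d
  width_out : width depth = 1
  A : ∀ i : ℕ, Matrix (Fin (width (i + 1))) (Fin (width i)) ℝ
  b : ∀ i : ℕ, Fin (width (i + 1)) → ℝ

namespace ReLUNet

variable {d : ℕ}

/-- The affine map `x ↦ A_i x + b_i` of layer `i`. -/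
def layer (Φ : ReLUNet d) (i : ℕ) (x : Fin (Φ.width i) → ℝ) :
    Fin (Φ.width (i + 1)) → ℝ :=
  fun j => (∑ k, Φ.A i j k * x k) + Φ.b i j

/-- Output after the first `i` affine layers, with the ReLU activation `ρ(x) = max{x,0}`
applied between consecutive affine layers (not on the input and not after the last
affine layer). -/
def forward (Φ : ReLUNet d) : (i : ℕ) → (Fin (Φ.width 0) → ℝ) → Fin (Φ.width i) → ℝ
  | 0, x => x
  | i + 1, x =>
      Φ.layer i fun k => if i = 0 then Φ.forward i x k else max (Φ.forward i x k) 0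

/-- The realization `R(Φ) : ℝ^d → ℝ` of a network configuration. -/
def realization (Φ : ReLUNet d) (x : Fin d → ℝ) : ℝ :=
  Φ.forward Φ.depth (fun k => x (Fin.cast Φ.width_in k)) (Fin.cast Φ.width_out.symm 0)

/-- All layer widths are at most `W`. -/
def widthLe (Φ : ReLUNet d) (W : ℕ) : Prop :=
  ∀ i ≤ Φ.depth, Φ.width i ≤ W

/-- All weights have absolute value at most `B`. -/
def magLe (Φ : ReLUNet d) (B : ℝ) : Prop :=
  ∀ i < Φ.depth, (∀ j k, |Φ.A i j k| ≤ B) ∧ ∀ j, |Φ.b i j| ≤ B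

/-- All weights take values in the set `𝔸`. -/
def coefIn (Φ : ReLUNet d) (𝔸 : Set ℝ) : Prop :=
  ∀ i < Φ.depth, (∀ j k, Φ.A i j k ∈ 𝔸) ∧ ∀ j, Φ.b i j ∈ 𝔸

open Classical in
/-- The connectivity (total number of nonzero weights) of a network configuration. -/
def connectivity (Φ : ReLUNet d) : ℕ :=
  ∑ i ∈ Finset.range Φ.depth,
    ((Finset.univ.filter fun jk : Fin (Φ.width (i + 1)) × Fin (Φ.width i) =>
        Φ.A i jk.1 jk.2 ≠ 0).card
      + (Finset.univ.filter fun j : Fin (Φ.width (i + 1)) => Φ.b i j ≠ 0).card)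

end ReLUNet

/-- `R(d,W,L,B)`: realizations of ReLU networks with input dimension `d`, output
dimension 1, width at most `W`, depth at most `L`, and weight magnitude at most `B`. -/
def RclassB (d W L : ℕ) (B : ℝ) : Set ((Fin d → ℝ) → ℝ) :=
  {f | ∃ Φ : ReLUNet d, Φ.widthLe W ∧ Φ.depth ≤ L ∧ Φ.magLe B ∧ Φ.realization = f}

/-- `R(d,W,L)`: realizations with width at most `W` and depth at most `L`,
with no constraint on the weight magnitude. -/
def Rclass (d W L : ℕ) : Set ((Fin d → ℝ) → ℝ) :=
  {f | ∃ Φ : ReLUNet d, Φ.widthLe W ∧ Φ.depth ≤ L ∧ Φ.realization = f}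

/-- `R_𝔸(d,W,L)`: realizations with width at most `W`, depth at most `L`, and all
weights taking values in `𝔸`. -/
def RclassCoef (d W L : ℕ) (𝔸 : Set ℝ) : Set ((Fin d → ℝ) → ℝ) :=
  {f | ∃ Φ : ReLUNet d, Φ.widthLe W ∧ Φ.depth ≤ L ∧ Φ.coefIn 𝔸 ∧ Φ.realization = f}

/-- `R(d,W,L,B,s)`: realizations with width ≤ `W`, depth ≤ `L`, weight magnitude ≤ `B`,
and connectivity ≤ `s`. -/
def RclassSparse (d W L : ℕ) (B : ℝ) (s : ℕ) : Set ((Fin d → ℝ) → ℝ) :=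
  {f | ∃ Φ : ReLUNet d, Φ.widthLe W ∧ Φ.depth ≤ L ∧ Φ.magLe B ∧
    Φ.connectivity ≤ s ∧ Φ.realization = f}

/-- The unit cube `[0,1]^d`. -/
def unitCube (d : ℕ) : Set (Fin d → ℝ) := Set.univ.pi fun _ => Set.Icc (0 : ℝ) 1

/-- The `L^p([0,1]^d)` distance between two functions on `ℝ^d` (with `p = ⊤`
corresponding to `L^∞`). -/
def cubeDist (d : ℕ) (p : ℝ≥0∞) (f g : (Fin d → ℝ) → ℝ) : ℝ≥0∞ :=
  eLpNorm (f - g) p (volume.restrict (unitCube d))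

/-- The `L^p([0,1])` distance between two functions on `ℝ`. -/
def intervalDist (p : ℝ≥0∞) (f g : ℝ → ℝ) : ℝ≥0∞ :=
  eLpNorm (f - g) p (volume.restrict (Set.Icc (0 : ℝ) 1))

/-- The `ε`-covering number of `X` with respect to the extended distance `δ`:
the cardinality of a smallest subset `C ⊆ X` such that every point of `X` is within
distance `ε` of some point of `C` (equal to `⊤` if no finite covering exists). -/
def coveringNumber {α : Type*} (ε : ℝ≥0∞) (X : Set α) (δ : α → α → ℝ≥0∞) : ℕ∞ :=
  sInf {n : ℕ∞ | ∃ C : Finset α, ↑C ⊆ X ∧ (∀ x ∈ X, ∃ c ∈ C, δ x c ≤ ε) ∧ (C.card : ℕ∞) = n}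

/-- The `ε`-packing number of `X` with respect to the extended distance `δ`:
the cardinality of a largest subset of `X` whose points have pairwise distances `> ε`. -/
def packingNumber {α : Type*} (ε : ℝ≥0∞) (X : Set α) (δ : α → α → ℝ≥0∞) : ℕ∞ :=
  sSup {n : ℕ∞ | ∃ C : Finset α, ↑C ⊆ X ∧
    (∀ x ∈ C, ∀ y ∈ C, x ≠ y → ε < δ x y) ∧ (C.card : ℕ∞) = n}

/-- Base-2 logarithm of an extended natural number, valued in `ℝ≥0∞`. -/
def elog2 (n : ℕ∞) : ℝ≥0∞ :=
  if n = ⊤ then ⊤ else ENNReal.ofReal (Real.logb 2 (n.toNat : ℝ))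

/-- The minimax approximation error `A(G, F, δ) = sup_{g ∈ G} inf_{f ∈ F} δ(f, g)`. -/
def minimaxErr {α : Type*} (G F : Set α) (δ : α → α → ℝ≥0∞) : ℝ≥0∞ :=
  ⨆ g ∈ G, ⨅ f ∈ F, δ f g

/-- The set `[−B, B] ∩ 2^{−b}ℤ` of `b`-bit quantized weights of magnitude at most `B`. -/
def quantSet (B : ℝ) (b : ℕ) : Set ℝ :=
  {x | x ∈ Set.Icc (-B) B ∧ ∃ k : ℤ, x = (k : ℝ) * (2 : ℝ) ^ (-(b : ℤ))}

/-- Quantization of a real number to a multiple of `2^{-b}`, rounding toward zero. -/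
noncomputable def qz (b : ℕ) (x : ℝ) : ℝ :=
  ((if 0 ≤ x then ⌊x * 2 ^ b⌋ else -⌊(-x) * 2 ^ b⌋ : ℤ) : ℝ) * (2 : ℝ) ^ (-(b : ℤ))

lemma qz_abs_le (b : ℕ) (x : ℝ) : |qz b x| ≤ |x| := by
  have ht : (0:ℝ) < 2 ^ b := by positivity
  rw [qz, zpow_neg, zpow_natCast]
  rcases le_or_gt 0 x with h | h
  · rw [if_pos h]
    have h1 : (0:ℝ) ≤ (⌊x * 2 ^ b⌋ : ℝ) := by
      have := Int.floor_nonneg.mpr (by positivity : (0:ℝ) ≤ x * 2 ^ b)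
      exact_mod_cast this
    have h2 : (⌊x * 2 ^ b⌋ : ℝ) ≤ x * 2 ^ b := Int.floor_le _
    rw [abs_of_nonneg h, abs_of_nonneg (by positivity)]
    nlinarith [mul_le_mul_of_nonneg_right h2 (inv_pos.mpr ht).le,
      mul_inv_cancel₀ (ne_of_gt ht)]
  · rw [if_neg (not_le.mpr h)]
    have h1 : (0:ℝ) ≤ (⌊(-x) * 2 ^ b⌋ : ℝ) := by
      have := Int.floor_nonneg.mpr (by nlinarith : (0:ℝ) ≤ (-x) * 2 ^ b)
      exact_mod_cast this
    have h2 : (⌊(-x) * 2 ^ b⌋ : ℝ) ≤ (-x) * 2 ^ b := Int.floor_le _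
    push_cast
    rw [abs_of_nonpos (by nlinarith [mul_nonneg h1 (inv_pos.mpr ht).le]), abs_of_neg h]
    nlinarith [mul_le_mul_of_nonneg_right h2 (inv_pos.mpr ht).le,
      mul_inv_cancel₀ (ne_of_gt ht), mul_nonneg h1 (inv_pos.mpr ht).le]

lemma qz_sub_abs_le (b : ℕ) (x : ℝ) : |qz b x - x| ≤ (2:ℝ) ^ (-(b:ℤ)) := by
  have ht : (0:ℝ) < 2 ^ b := by positivity
  rw [qz, zpow_neg, zpow_natCast]
  rcases le_or_gt 0 x with h | h
  · rw [if_pos h]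
    have h2 : (⌊x * 2 ^ b⌋ : ℝ) ≤ x * 2 ^ b := Int.floor_le _
    have h3 : x * 2 ^ b - 1 < (⌊x * 2 ^ b⌋ : ℝ) := Int.sub_one_lt_floor _
    rw [abs_le]
    constructor <;> nlinarith [mul_le_mul_of_nonneg_right h2 (inv_pos.mpr ht).le,
      mul_le_mul_of_nonneg_right (le_of_lt h3) (inv_pos.mpr ht).le,
      mul_inv_cancel₀ (ne_of_gt ht)]
  · rw [if_neg (not_le.mpr h)]
    have h2 : (⌊(-x) * 2 ^ b⌋ : ℝ) ≤ (-x) * 2 ^ b := Int.floor_le _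
    have h3 : (-x) * 2 ^ b - 1 < (⌊(-x) * 2 ^ b⌋ : ℝ) := Int.sub_one_lt_floor _
    push_cast
    rw [abs_le]
    constructor <;> nlinarith [mul_le_mul_of_nonneg_right h2 (inv_pos.mpr ht).le,
      mul_le_mul_of_nonneg_right (le_of_lt h3) (inv_pos.mpr ht).le,
      mul_inv_cancel₀ (ne_of_gt ht)]

lemma qz_mem_quantSet {B : ℝ} (b : ℕ) {x : ℝ} (h : |x| ≤ B) : qz b x ∈ quantSet B b := by
  refine ⟨abs_le.mp ((qz_abs_le b x).trans h), _, rfl⟩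

/-- The quantized network: every weight replaced by its quantization. -/
noncomputable def ReLUNet.quant {d : ℕ} (Φ : ReLUNet d) (b : ℕ) : ReLUNet d where
  depth := Φ.depth
  depth_pos := Φ.depth_pos
  width := Φ.width
  width_in := Φ.width_in
  width_out := Φ.width_out
  A := fun i j k => qz b (Φ.A i j k)
  b := fun i j => qz b (Φ.b i j)


lemma aux2 (n W : ℕ) (Q R ε : ℝ) (hQ : 1 ≤ Q) (hR : 1 ≤ R) (hε : 0 ≤ ε) :
    (W:ℝ) * (ε * (Q*R) + ((n:ℝ)+1) * (R*(Q*ε))) + ε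
      ≤ ((n:ℝ)+2) * (R*((W:ℝ)+1)) * Q * ε := by
  have hQR : 1 ≤ Q*R := by nlinarith
  have hn0 : (0:ℝ) ≤ (n:ℝ) := Nat.cast_nonneg n
  have hW0 : (0:ℝ) ≤ (W:ℝ) := Nat.cast_nonneg W
  nlinarith [mul_nonneg hε (sub_nonneg.mpr hQR),
    mul_nonneg (mul_nonneg hn0 (by positivity : (0:ℝ) ≤ Q*R)) hε,
    mul_nonneg (by positivity : (0:ℝ) ≤ Q*R) hε]

lemma arith_step (W i : ℕ) (B ε : ℝ) (hB : 1 ≤ B) (hε : 0 ≤ ε) :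
    (W:ℝ) * (ε * (B*((W:ℝ)+1))^i + B * ((i:ℝ)*((W:ℝ)+1)^i*B^(i-1)*ε)) + ε
      ≤ ((i:ℝ)+1) * ((W:ℝ)+1)^(i+1) * B^i * ε := by
  have hW0 : (0:ℝ) ≤ W := Nat.cast_nonneg W
  cases i with
  | zero => simp; nlinarith
  | succ n =>
    have hQ : (1:ℝ) ≤ B^(n+1) := one_le_pow₀ hB
    have hR : (1:ℝ) ≤ ((W:ℝ)+1)^(n+1) := one_le_pow₀ (by linarith)
    push_cast
    calc (W:ℝ) * (ε * (B*((W:ℝ)+1))^(n+1)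
          + B * (((n:ℝ)+1)*((W:ℝ)+1)^(n+1)*B^(n+1-1)*ε)) + ε
        = (W:ℝ) * (ε * (B^(n+1)*((W:ℝ)+1)^(n+1))
            + ((n:ℝ)+1) * (((W:ℝ)+1)^(n+1)*(B^(n+1)*ε))) + ε := by
          rw [mul_pow, Nat.add_sub_cancel, pow_succ]; ring
      _ ≤ ((n:ℝ)+2) * (((W:ℝ)+1)^(n+1)*((W:ℝ)+1)) * B^(n+1) * ε :=
          aux2 n W (B^(n+1)) (((W:ℝ)+1)^(n+1)) ε hQ hR hε
      _ = ((n:ℝ)+1+1) * ((W:ℝ)+1)^(n+1+1) * B^(n+1) * ε := by rw [pow_succ]; ring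

lemma forward_key {d : ℕ} (Φ : ReLUNet d) (b W : ℕ) (B : ℝ) (hB : 1 ≤ B)
    (hW : Φ.widthLe W) (hmag : Φ.magLe B) (i : ℕ) (hi : i ≤ Φ.depth)
    (x : Fin (Φ.width 0) → ℝ) (hx : ∀ k, |x k| ≤ 1) :
    (∀ j, |Φ.forward i x j| ≤ (B*((W:ℝ)+1))^i) ∧
    (∀ j : Fin (Φ.width i),
      |Φ.forward i x j - (Φ.quant b).forward i x j| ≤
        (i:ℝ) * ((W:ℝ)+1)^i * B^(i-1) * (2:ℝ)^(-(b:ℤ))) := by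
  set ε : ℝ := (2:ℝ)^(-(b:ℤ)) with hεdef
  have hε : 0 ≤ ε := by positivity
  induction i with
  | zero =>
    constructor
    · intro j; simpa [ReLUNet.forward] using hx j
    · intro j
      have : Φ.forward 0 x j - (Φ.quant b).forward 0 x j = 0 := by
        simp [ReLUNet.forward]
      rw [this, abs_zero]; positivity
  | succ i ih =>
    have hid : i ≤ Φ.depth := Nat.le_of_succ_le hi
    obtain ⟨hM, hE⟩ := ih hid
    set M : ℝ := (B*((W:ℝ)+1))^i with hMdef
    set E : ℝ := (i:ℝ) * ((W:ℝ)+1)^i * B^(i-1) * ε with hEdef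
    have hM1 : (1:ℝ) ≤ M := one_le_pow₀ (by nlinarith [Nat.cast_nonneg (α := ℝ) W])
    have hE0 : 0 ≤ E := by positivity
    set u : Fin (Φ.width i) → ℝ :=
      fun k => if i = 0 then Φ.forward i x k else max (Φ.forward i x k) 0 with hudef
    set v : Fin (Φ.width i) → ℝ :=
      fun k => if i = 0 then (Φ.quant b).forward i x k
        else max ((Φ.quant b).forward i x k) 0 with hvdef
    have hu : ∀ k, |u k| ≤ M := by
      intro k
      by_cases h0 : i = 0
      · subst h0
        simp only [hudef, if_pos rfl]
        simpa [ReLUNet.forward, hMdef] using hx k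
      · simp only [hudef, if_neg h0]
        calc |max (Φ.forward i x k) 0| ≤ |Φ.forward i x k| := by
              simpa using abs_max_sub_max_le_abs (Φ.forward i x k) 0 0
          _ ≤ M := hM k
    have huv : ∀ k, |u k - v k| ≤ E := by
      intro k
      by_cases h0 : i = 0
      · subst h0
        have : u k = v k := by simp [hudef, hvdef, ReLUNet.forward, ReLUNet.quant]
        rw [this, sub_self, abs_zero]; exact hE0
      · simp only [hudef, hvdef, if_neg h0]
        exact le_trans (abs_max_sub_max_le_abs _ _ 0) (hE k)
    have idepth : i < Φ.depth := Nat.lt_of_succ_le hi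
    obtain ⟨hA, hb⟩ := hmag i idepth
    have hwle : (Φ.width i : ℝ) ≤ (W : ℝ) := by exact_mod_cast hW i hid
    have hfwd : ∀ j, Φ.forward (i+1) x j = (∑ k, Φ.A i j k * u k) + Φ.b i j := by
      intro j; rfl
    have hfwd' : ∀ j, (Φ.quant b).forward (i+1) x j
        = (∑ k, qz b (Φ.A i j k) * v k) + qz b (Φ.b i j) := by
      intro j; rfl
    have hstep : ∀ j : Fin (Φ.width (i+1)),
        |Φ.forward (i+1) x j - (Φ.quant b).forward (i+1) x j|
          ≤ (W:ℝ) * (ε * M + B * E) + ε := by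
      intro j
      rw [hfwd j, hfwd' j]
      have e1 : ((∑ k, Φ.A i j k * u k) + Φ.b i j)
          - ((∑ k, qz b (Φ.A i j k) * v k) + qz b (Φ.b i j))
          = (∑ k, (Φ.A i j k * u k - qz b (Φ.A i j k) * v k))
            + (Φ.b i j - qz b (Φ.b i j)) := by
        rw [Finset.sum_sub_distrib]; ring
      rw [e1]
      have termbd : ∀ k, |Φ.A i j k * u k - qz b (Φ.A i j k) * v k| ≤ ε * M + B * E := by
        intro k
        have e2 : Φ.A i j k * u k - qz b (Φ.A i j k) * v k
            = (Φ.A i j k - qz b (Φ.A i j k)) * u k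
              + qz b (Φ.A i j k) * (u k - v k) := by ring
        rw [e2]
        refine le_trans (abs_add_le _ _) ?_
        have t1 : |(Φ.A i j k - qz b (Φ.A i j k)) * u k| ≤ ε * M := by
          rw [abs_mul]
          refine mul_le_mul ?_ (hu k) (abs_nonneg _) hε
          rw [abs_sub_comm]; exact qz_sub_abs_le b _
        have t2 : |qz b (Φ.A i j k) * (u k - v k)| ≤ B * E := by
          rw [abs_mul]
          exact mul_le_mul ((qz_abs_le _ _).trans (hA j k)) (huv k) (abs_nonneg _)
            (by linarith)
        linarith
      calc |(∑ k, (Φ.A i j k * u k - qz b (Φ.A i j k) * v k))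
            + (Φ.b i j - qz b (Φ.b i j))|
          ≤ |∑ k, (Φ.A i j k * u k - qz b (Φ.A i j k) * v k)|
            + |Φ.b i j - qz b (Φ.b i j)| := abs_add_le _ _
        _ ≤ (∑ k, |Φ.A i j k * u k - qz b (Φ.A i j k) * v k|) + ε := by
            refine add_le_add (Finset.abs_sum_le_sum_abs _ _) ?_
            rw [abs_sub_comm]; exact qz_sub_abs_le b _
        _ ≤ ((Φ.width i : ℝ)) * (ε * M + B * E) + ε := by
            refine add_le_add ?_ le_rfl
            have := Finset.sum_le_card_nsmul Finset.univ
              (fun k => |Φ.A i j k * u k - qz b (Φ.A i j k) * v k|)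
              (ε * M + B * E) (fun k _ => termbd k)
            simp only [nsmul_eq_mul, Finset.card_univ, Fintype.card_fin] at this
            linarith
        _ ≤ (W:ℝ) * (ε * M + B * E) + ε := by
            refine add_le_add (mul_le_mul_of_nonneg_right hwle ?_) le_rfl
            positivity
    constructor
    · intro j
      rw [hfwd j]
      calc |(∑ k, Φ.A i j k * u k) + Φ.b i j|
          ≤ (∑ k, |Φ.A i j k * u k|) + |Φ.b i j| :=
            le_trans (abs_add_le _ _) (add_le_add (Finset.abs_sum_le_sum_abs _ _) le_rfl)
        _ ≤ ((Φ.width i : ℝ)) * (B * M) + B := by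
            refine add_le_add ?_ (hb j)
            have := Finset.sum_le_card_nsmul Finset.univ
              (fun k => |Φ.A i j k * u k|) (B * M) (fun k _ => by
                show |Φ.A i j k * u k| ≤ B * M
                rw [abs_mul]
                exact mul_le_mul (hA j k) (hu k) (abs_nonneg _) (by linarith))
            simp only [nsmul_eq_mul, Finset.card_univ, Fintype.card_fin] at this
            linarith
        _ ≤ (W:ℝ) * (B * M) + B :=
            add_le_add (mul_le_mul_of_nonneg_right hwle (by nlinarith)) le_rfl
        _ ≤ (B*((W:ℝ)+1))^(i+1) := by
            rw [pow_succ, hMdef]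
            nlinarith [Nat.cast_nonneg (α := ℝ) W, one_le_pow₀ (a := B*((W:ℝ)+1)) (n := i)
              (by nlinarith [Nat.cast_nonneg (α := ℝ) W])]
    · intro j
      refine le_trans (hstep j) ?_
      have := arith_step W i B ε hB hε
      rw [hMdef, hEdef] at *
      calc (W:ℝ) * (ε * (B*((W:ℝ)+1))^i + B * ((i:ℝ)*((W:ℝ)+1)^i*B^(i-1)*ε)) + ε
          ≤ ((i:ℝ)+1) * ((W:ℝ)+1)^(i+1) * B^i * ε := this
        _ = ((i+1:ℕ):ℝ) * ((W:ℝ)+1)^(i+1) * B^((i+1)-1) * ε := by push_cast; ring_nf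

/-- `R_{[−B,B] ∩ 2^{−b}ℤ}(d,W,L)` is an
`L (W+1)^L B^{L−1} 2^{−b}`-covering of `R(d,W,L,B)` in the `L^p([0,1]^d)`-norm. -/
theorem quantized_nets_form_covering
    (p : ℝ≥0∞) (d W L b : ℕ) (B : ℝ)
    (hp : 1 ≤ p) (hd : 0 < d) (hL : 0 < L) (hW : d ≤ W) (hB : 1 ≤ B) :
    ∀ f ∈ RclassB d W L B, ∃ g ∈ RclassCoef d W L (quantSet B b),
      cubeDist d p f g
        ≤ ENNReal.ofReal
            ((L : ℝ) * ((W : ℝ) + 1) ^ L * B ^ (L - 1) * (2 : ℝ) ^ (-(b : ℤ))) := by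
  intro f hf
  obtain ⟨Φ, hΦW, hΦL, hΦB, hΦf⟩ := hf
  set ε : ℝ := (2:ℝ)^(-(b:ℤ)) with hεdef
  have hε : 0 ≤ ε := by positivity
  set C : ℝ := (L : ℝ) * ((W : ℝ) + 1) ^ L * B ^ (L - 1) * ε with hCdef
  refine ⟨(Φ.quant b).realization, ⟨Φ.quant b, hΦW, hΦL, ?_, rfl⟩, ?_⟩
  · intro i hi
    obtain ⟨hA, hb⟩ := hΦB i hi
    exact ⟨fun j k => qz_mem_quantSet b (hA j k), fun j => qz_mem_quantSet b (hb j)⟩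
  · have hpt : ∀ x ∈ unitCube d, |f x - (Φ.quant b).realization x| ≤ C := by
      intro x hx
      have hxin : ∀ k : Fin (Φ.width 0), |x (Fin.cast Φ.width_in k)| ≤ 1 := by
        intro k
        have := hx (Fin.cast Φ.width_in k) (Set.mem_univ _)
        exact abs_le.mpr ⟨by linarith [this.1], this.2⟩
      have hkey := (forward_key Φ b W B hB hΦW hΦB Φ.depth le_rfl
        (fun k => x (Fin.cast Φ.width_in k)) hxin).2 (Fin.cast Φ.width_out.symm 0)
      have hreal : |f x - (Φ.quant b).realization x|
          ≤ (Φ.depth : ℝ) * ((W:ℝ)+1)^Φ.depth * B^(Φ.depth-1) * ε := by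
        rw [← hΦf]; exact hkey
      refine hreal.trans ?_
      rw [hCdef]
      have h1 : (Φ.depth:ℝ) ≤ (L:ℝ) := by exact_mod_cast hΦL
      have h2 : ((W:ℝ)+1)^Φ.depth ≤ ((W:ℝ)+1)^L :=
        pow_le_pow_right₀ (by linarith [Nat.cast_nonneg (α := ℝ) W]) hΦL
      have h3 : B^(Φ.depth-1) ≤ B^(L-1) :=
        pow_le_pow_right₀ hB (Nat.sub_le_sub_right hΦL 1)
      gcongr <;> positivity
    have hC0 : 0 ≤ C := by positivity
    have hmeas : MeasurableSet (unitCube d) :=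
      MeasurableSet.univ_pi (fun _ => measurableSet_Icc)
    have hae : ∀ᵐ x ∂(volume.restrict (unitCube d)),
        ‖(f - (Φ.quant b).realization) x‖ ≤ C := by
      filter_upwards [ae_restrict_mem hmeas] with x hx
      simpa [Real.norm_eq_abs] using hpt x hx
    have hμ : (volume.restrict (unitCube d)) Set.univ = 1 := by
      rw [Measure.restrict_apply_univ]
      unfold unitCube
      rw [volume_pi_pi]
      simp
    calc cubeDist d p f ((Φ.quant b).realization)
        ≤ (volume.restrict (unitCube d)) Set.univ ^ p.toReal⁻¹ * ENNReal.ofReal C :=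
          eLpNorm_le_of_ae_bound hae
      _ = ENNReal.ofReal C := by rw [hμ, ENNReal.one_rpow, one_mul]
end
end

section
/- For every N ∈ ℕ with N ≥ 2 and all ε, E ∈ ℝ_+, the packing number of the class Σ(X_N, E) of bounded continuous piecewise linear functions with breakpoints X_N = (i/N)_{i=0}^{N} satisfies log M(ε, Σ(X_N, E), L^1([0,1])) ≥ N · log(⌈E/(4εN)⌉). -/
open MeasureTheory ProbabilityTheory ENNReal

noncomputable section

/-- `Σ(X_N, E)`: bounded continuous piecewise linear functions with breakpoints
`X_N = (i/N)_{i=0}^{N}`: continuous functions `f : ℝ → ℝ` with `‖f‖_{L^∞(ℝ)} ≤ E`,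
constant on `(−∞, 0]` and on `[1, ∞)`, and affine on each `[i/N, (i+1)/N]`. -/
def SigmaClass (N : ℕ) (E : ℝ) : Set (ℝ → ℝ) :=
  {f | Continuous f ∧ (∀ x : ℝ, |f x| ≤ E) ∧
    (∀ x ≤ (0 : ℝ), f x = f 0) ∧ (∀ x : ℝ, 1 ≤ x → f x = f 1) ∧
    ∀ i : ℕ, i < N → ∃ a c : ℝ,
      ∀ x ∈ Set.Icc ((i : ℝ) / N) (((i : ℝ) + 1) / N), f x = a * x + c}

def clamp01 (t : ℝ) : ℝ := min 1 (max 0 t)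

lemma clamp01_continuous : Continuous clamp01 := by unfold clamp01; fun_prop

lemma clamp01_of_nonpos {t : ℝ} (h : t ≤ 0) : clamp01 t = 0 := by
  unfold clamp01; rw [max_eq_left h, min_eq_right zero_le_one]

lemma clamp01_of_one_le {t : ℝ} (h : 1 ≤ t) : clamp01 t = 1 := by
  unfold clamp01; rw [max_eq_right (le_trans zero_le_one h), min_eq_left h]

lemma clamp01_of_mem {t : ℝ} (h0 : 0 ≤ t) (h1 : t ≤ 1) : clamp01 t = t := by
  unfold clamp01; rw [max_eq_right h0, min_eq_right h1]

def pwl (N : ℕ) (w : ℕ → ℝ) (x : ℝ) : ℝ :=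
  ∑ i ∈ Finset.range N, (w (i+1) - w i) * clamp01 (N * x - i)

lemma pwl_continuous (N : ℕ) (w : ℕ → ℝ) : Continuous (pwl N w) := by
  unfold pwl
  exact continuous_finset_sum _ fun i _ =>
    continuous_const.mul (clamp01_continuous.comp (by fun_prop))

lemma pwl_of_nonpos (N : ℕ) (w : ℕ → ℝ) {x : ℝ} (hx : x ≤ 0) : pwl N w x = 0 := by
  unfold pwl
  refine Finset.sum_eq_zero fun i _ => ?_
  have h1 : (N:ℝ) * x - i ≤ 0 := by
    have : (N:ℝ) * x ≤ 0 := mul_nonpos_of_nonneg_of_nonpos (Nat.cast_nonneg N) hx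
    have : (0:ℝ) ≤ i := Nat.cast_nonneg i
    linarith
  rw [clamp01_of_nonpos h1, mul_zero]

lemma pwl_of_one_le (N : ℕ) (w : ℕ → ℝ) {x : ℝ} (hx : 1 ≤ x) : pwl N w x = w N - w 0 := by
  unfold pwl
  rw [show w N - w 0 = ∑ i ∈ Finset.range N, (w (i+1) - w i) from (Finset.sum_range_sub w N).symm]
  refine Finset.sum_congr rfl fun i hi => ?_
  have hiN : i < N := Finset.mem_range.mp hi
  have h1 : (1:ℝ) ≤ (N:ℝ) * x - i := by
    have h2 : (i:ℝ) + 1 ≤ (N:ℝ) := by exact_mod_cast hiN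
    have h3 : (N:ℝ) ≤ (N:ℝ) * x := le_mul_of_one_le_right (Nat.cast_nonneg N) hx
    linarith
  rw [clamp01_of_one_le h1, mul_one]

lemma pwl_eval (N : ℕ) (w : ℕ → ℝ) {j : ℕ} (hj : j < N) {x : ℝ}
    (hx : x ∈ Set.Icc ((j:ℝ)/N) (((j:ℝ)+1)/N)) :
    pwl N w x = (w j - w 0) + (w (j+1) - w j) * ((N:ℝ) * x - j) := by
  have hN : (0:ℝ) < N := by
    have : 0 < N := Nat.lt_of_le_of_lt (Nat.zero_le j) hj
    exact_mod_cast this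
  have hx1 : (j:ℝ) ≤ (N:ℝ) * x := by
    have := hx.1
    rw [div_le_iff₀ hN] at this
    nlinarith
  have hx2 : (N:ℝ) * x ≤ (j:ℝ) + 1 := by
    have := hx.2
    rw [le_div_iff₀ hN] at this
    nlinarith
  unfold pwl
  rw [← Finset.sum_range_add_sum_Ico _ (le_of_lt hj),
      Finset.sum_eq_sum_Ico_succ_bot hj]
  have e1 : ∑ i ∈ Finset.range j, (w (i+1) - w i) * clamp01 ((N:ℝ) * x - i)
      = w j - w 0 := by
    rw [show w j - w 0 = ∑ i ∈ Finset.range j, (w (i+1) - w i) from (Finset.sum_range_sub w j).symm]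
    refine Finset.sum_congr rfl fun i hi => ?_
    have hij : i < j := Finset.mem_range.mp hi
    have : (1:ℝ) ≤ (N:ℝ) * x - i := by
      have : (i:ℝ) + 1 ≤ (j:ℝ) := by exact_mod_cast hij
      linarith
    rw [clamp01_of_one_le this, mul_one]
  have e2 : clamp01 ((N:ℝ) * x - j) = (N:ℝ) * x - j :=
    clamp01_of_mem (by linarith) (by linarith)
  have e3 : ∑ i ∈ Finset.Ico (j+1) N, (w (i+1) - w i) * clamp01 ((N:ℝ) * x - i) = 0 := by
    refine Finset.sum_eq_zero fun i hi => ?_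
    have hij : j + 1 ≤ i := (Finset.mem_Ico.mp hi).1
    have : (N:ℝ) * x - i ≤ 0 := by
      have : (j:ℝ) + 1 ≤ (i:ℝ) := by exact_mod_cast hij
      linarith
    rw [clamp01_of_nonpos this, mul_zero]
  rw [e1, e2, e3]
  ring

lemma exists_piece (N : ℕ) (hN : 1 ≤ N) {x : ℝ} (hx : x ∈ Set.Icc (0:ℝ) 1) :
    ∃ j, j < N ∧ x ∈ Set.Icc ((j:ℝ)/N) (((j:ℝ)+1)/N) := by
  have hN0 : (0:ℝ) < N := by exact_mod_cast hN
  have hx0 : (0:ℝ) ≤ (N:ℝ) * x := mul_nonneg (le_of_lt hN0) hx.1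
  refine ⟨min ⌊(N:ℝ) * x⌋₊ (N-1), by omega, ?_, ?_⟩
  · rw [div_le_iff₀ hN0]
    calc ((min ⌊(N:ℝ) * x⌋₊ (N-1) : ℕ) : ℝ) ≤ (⌊(N:ℝ) * x⌋₊ : ℝ) := by
          exact_mod_cast Nat.cast_le.mpr (min_le_left _ _)
      _ ≤ (N:ℝ) * x := Nat.floor_le hx0
      _ = x * N := mul_comm _ _
  · rw [le_div_iff₀ hN0]
    rcases le_or_gt ⌊(N:ℝ) * x⌋₊ (N-1) with h | h
    · rw [min_eq_left h]
      have := Nat.lt_floor_add_one ((N:ℝ) * x)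
      linarith [this]
    · rw [min_eq_right (le_of_lt h)]
      have : ((N:ℝ) - 1) + 1 = N := by ring
      have hcast : ((N - 1 : ℕ) : ℝ) = (N:ℝ) - 1 := by
        have : 1 ≤ N := hN; push_cast [this]; ring
      rw [hcast]
      nlinarith [hx.2]

lemma pwl_mem_sigmaClass (N : ℕ) (hN : 1 ≤ N) (w : ℕ → ℝ) (hw0 : w 0 = 0) (E : ℝ)
    (hbd : ∀ i, i ≤ N → 0 ≤ w i ∧ w i ≤ E) : pwl N w ∈ SigmaClass N E := by
  have hE : 0 ≤ E := (hbd 0 (Nat.zero_le N)).2.trans_eq' hw0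
  refine ⟨pwl_continuous N w, ?_, ?_, ?_, ?_⟩
  · intro x
    rcases le_or_gt x 0 with hx | hx
    · rw [pwl_of_nonpos N w hx]; simpa using hE
    rcases le_or_gt 1 x with hx1 | hx1
    · rw [pwl_of_one_le N w hx1, hw0, sub_zero, abs_of_nonneg (hbd N le_rfl).1]
      exact (hbd N le_rfl).2
    obtain ⟨j, hj, hxj⟩ := exists_piece N hN ⟨le_of_lt hx, le_of_lt hx1⟩
    rw [pwl_eval N w hj hxj, hw0, sub_zero]
    have hN0 : (0:ℝ) < N := by positivity
    have ht0 : (0:ℝ) ≤ (N:ℝ) * x - j := by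
      have := hxj.1; rw [div_le_iff₀ hN0] at this; nlinarith
    have ht1 : (N:ℝ) * x - j ≤ 1 := by
      have := hxj.2; rw [le_div_iff₀ hN0] at this; nlinarith
    obtain ⟨ha0, haE⟩ := hbd j (le_of_lt hj)
    obtain ⟨hb0, hbE⟩ := hbd (j+1) hj
    rw [abs_le]
    constructor <;> nlinarith
  · intro x hx
    rw [pwl_of_nonpos N w hx, pwl_of_nonpos N w le_rfl]
  · intro x hx
    rw [pwl_of_one_le N w hx, pwl_of_one_le N w le_rfl]
  · intro i hi
    exact ⟨(N:ℝ) * (w (i+1) - w i), (w i - w 0) - (w (i+1) - w i) * i,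
      fun x hx => by rw [pwl_eval N w hi hx]; ring⟩

lemma trap_integral (a b s t : ℝ) :
    ∫ x in s..t, (a*x+b) = (t - s) * ((a*s+b)+(a*t+b))/2 := by
  rw [intervalIntegral.integral_add ((by fun_prop : Continuous fun x:ℝ => a*x).intervalIntegrable s t)
      intervalIntegrable_const,
    show (fun x:ℝ => a*x) = fun x:ℝ => a * id x from rfl,
    intervalIntegral.integral_const_mul]
  simp only [id_eq]
  rw [integral_id, intervalIntegral.integral_const, smul_eq_mul]
  ring

lemma abs_trap_le (a b s t : ℝ) (hst : s ≤ t) :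
    (t - s) * |(a*s+b)+(a*t+b)| / 2 ≤ ∫ x in s..t, |a*x+b| := by
  have h1 : |∫ x in s..t, (a*x+b)| ≤ ∫ x in s..t, |a*x+b| :=
    intervalIntegral.abs_integral_le_integral_abs (μ := volume) (f := fun x => a*x+b) hst
  rw [trap_integral] at h1
  calc (t - s) * |(a*s+b)+(a*t+b)| / 2 = |(t - s) * ((a*s+b)+(a*t+b))/2| := by
        rw [abs_div, abs_mul, abs_of_nonneg (by linarith : (0:ℝ) ≤ t - s),
          abs_of_nonneg (by norm_num : (0:ℝ) ≤ 2)]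
    _ ≤ _ := h1

lemma key_lower (a b p q c u v : ℝ) (hpq : p ≤ q) (hc : 0 < c)
    (hudef : a*p+b = u) (hvdef : a*q+b = v)
    (hu : u = 0 ∨ c ≤ |u|) (hv : c ≤ |v|) :
    (q - p) * c / 2 ≤ ∫ x in p..q, |a*x+b| := by
  by_cases hs : 0 ≤ u * v
  · have h1 : c ≤ |u + v| := by
      rcases le_or_gt 0 v with h0v | h0v
      · rcases le_or_gt 0 u with h0u | h0u
        · rw [abs_of_nonneg (by linarith)]; rw [abs_of_nonneg h0v] at hv; linarith
        · have hvz : v = 0 := by nlinarith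
          rw [hvz] at hv; simp at hv; linarith
      · rcases le_or_gt u 0 with h0u | h0u
        · rw [abs_of_nonpos (by linarith)]; rw [abs_of_nonpos (le_of_lt h0v)] at hv; linarith
        · nlinarith
    have h2 := abs_trap_le a b p q hpq
    rw [hudef, hvdef] at h2
    calc (q - p) * c / 2 ≤ (q - p) * |u + v| / 2 := by
          gcongr <;> linarith
      _ ≤ _ := h2
  · have hune : u ≠ 0 := by intro h; rw [h, zero_mul] at hs; exact hs le_rfl
    have hcu : c ≤ |u| := hu.resolve_left hune
    have huv : u * v < 0 := lt_of_not_ge hs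
    have habs : 0 < |u| + |v| := by positivity
    set r := p + (q - p) * |u| / (|u| + |v|) with hrdef
    have hfrac0 : 0 ≤ (q - p) * |u| / (|u| + |v|) := by
      apply div_nonneg _ (le_of_lt habs)
      have : 0 ≤ q - p := by linarith
      positivity
    have hfrac1 : (q - p) * |u| / (|u| + |v|) ≤ q - p := by
      rw [div_le_iff₀ habs]
      nlinarith [abs_nonneg u, abs_nonneg v]
    have hpr : p ≤ r := by rw [hrdef]; linarith
    have hrq : r ≤ q := by rw [hrdef]; linarith
    have haq : a * (q - p) = v - u := by rw [← hudef, ← hvdef]; ring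
    have hr0 : a * r + b = 0 := by
      have expand : a * r + b = u + (a * (q - p)) * (|u| / (|u| + |v|)) := by
        rw [hrdef, ← hudef]; ring
      rw [expand, haq]
      rcases lt_or_gt_of_ne hune with hu0 | hu0
      · have hv0 : 0 < v := by nlinarith
        rw [abs_of_neg hu0, abs_of_pos hv0]
        have h3 : (-u + v) ≠ 0 := ne_of_gt (by linarith)
        field_simp
        ring
      · have hv0 : v < 0 := by nlinarith
        rw [abs_of_pos hu0, abs_of_neg hv0]
        have h3 : (u + -v) ≠ 0 := ne_of_gt (by linarith)
        field_simp
        ring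
    have hint : ∀ s t : ℝ, IntervalIntegrable (fun x => |a*x+b|) volume s t :=
      fun s t => (by fun_prop : Continuous fun x:ℝ => |a*x+b|).intervalIntegrable s t
    rw [← intervalIntegral.integral_add_adjacent_intervals (hint p r) (hint r q)]
    have l1 : (r - p) * c / 2 ≤ ∫ x in p..r, |a*x+b| := by
      have h := abs_trap_le a b p r hpr
      rw [hr0, add_zero, hudef] at h
      calc (r - p) * c / 2 ≤ (r - p) * |u| / 2 := by gcongr
        _ ≤ _ := h
    have l2 : (q - r) * c / 2 ≤ ∫ x in r..q, |a*x+b| := by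
      have h := abs_trap_le a b r q hrq
      rw [hr0, zero_add, hvdef] at h
      calc (q - r) * c / 2 ≤ (q - r) * |v| / 2 := by gcongr
        _ ≤ _ := h
    linarith

lemma dist_lower (N : ℕ) (c : ℝ) (hc : 0 < c) (w₁ w₂ : ℕ → ℝ)
    (hw₁ : w₁ 0 = 0) (hw₂ : w₂ 0 = 0) (j : ℕ) (hj : j < N)
    (hu : w₁ j - w₂ j = 0 ∨ c ≤ |w₁ j - w₂ j|) (hv : c ≤ |w₁ (j+1) - w₂ (j+1)|) :
    ENNReal.ofReal (c / (2*N)) ≤ intervalDist 1 (pwl N w₁) (pwl N w₂) := by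
  have hN0 : (0:ℝ) < N := by
    have : 0 < N := Nat.lt_of_le_of_lt (Nat.zero_le j) hj
    exact_mod_cast this
  have hjN : (j:ℝ) + 1 ≤ N := by exact_mod_cast hj
  set p := (j:ℝ)/N with hp
  set q := ((j:ℝ)+1)/N with hq
  have hpq : p ≤ q := by rw [hp, hq, div_le_div_iff₀ hN0 hN0]; nlinarith
  have hp0 : 0 ≤ p := by rw [hp]; positivity
  have hq1 : q ≤ 1 := by rw [hq, div_le_one hN0]; exact hjN
  have hNp : (N:ℝ) * p = j := by rw [hp]; field_simp
  have hNq : (N:ℝ) * q = (j:ℝ) + 1 := by rw [hq]; field_simp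
  set a := (N:ℝ) * ((w₁ (j+1) - w₂ (j+1)) - (w₁ j - w₂ j)) with ha
  set b := (w₁ j - w₂ j) - ((w₁ (j+1) - w₂ (j+1)) - (w₁ j - w₂ j)) * j with hb
  have heq : ∀ x ∈ Set.Icc p q, pwl N w₁ x - pwl N w₂ x = a * x + b := by
    intro x hx
    rw [pwl_eval N w₁ hj hx, pwl_eval N w₂ hj hx, hw₁, hw₂, ha, hb]
    ring
  have hud : a * p + b = w₁ j - w₂ j := by
    rw [ha, hb]; linear_combination ((w₁ (j+1) - w₂ (j+1)) - (w₁ j - w₂ j)) * hNp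
  have hvd : a * q + b = w₁ (j+1) - w₂ (j+1) := by
    rw [ha, hb]; linear_combination ((w₁ (j+1) - w₂ (j+1)) - (w₁ j - w₂ j)) * hNq
  have hkey : (q - p) * c / 2 ≤ ∫ x in p..q, |a*x+b| :=
    key_lower a b p q c _ _ hpq hc hud hvd hu hv
  have hqp : q - p = 1/N := by rw [hp, hq]; field_simp; ring
  unfold intervalDist
  rw [eLpNorm_one_eq_lintegral_enorm]
  have step1 : ∫⁻ x in Set.Icc p q, (‖(pwl N w₁ - pwl N w₂) x‖₊ : ℝ≥0∞)
      ≤ ∫⁻ x in Set.Icc (0:ℝ) 1, (‖(pwl N w₁ - pwl N w₂) x‖₊ : ℝ≥0∞) :=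
    lintegral_mono_set (Set.Icc_subset_Icc hp0 hq1)
  refine le_trans ?_ step1
  have step2 : ∫⁻ x in Set.Icc p q, (‖(pwl N w₁ - pwl N w₂) x‖₊ : ℝ≥0∞)
      = ∫⁻ x in Set.Icc p q, ENNReal.ofReal |a * x + b| := by
    refine setLIntegral_congr_fun measurableSet_Icc (fun x hx => ?_)
    rw [Pi.sub_apply, show ((‖pwl N w₁ x - pwl N w₂ x‖₊ : ℝ≥0∞)) = ‖pwl N w₁ x - pwl N w₂ x‖ₑ from rfl, Real.enorm_eq_ofReal_abs, heq x hx]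
  rw [step2]
  have hInt : IntegrableOn (fun x => |a * x + b|) (Set.Icc p q) :=
    (by fun_prop : Continuous fun x : ℝ => |a * x + b|).integrableOn_Icc
  rw [← MeasureTheory.ofReal_integral_eq_lintegral_ofReal hInt
    (ae_of_all _ fun x => abs_nonneg _)]
  apply ENNReal.ofReal_le_ofReal
  have hicc : ∫ x in Set.Icc p q, |a * x + b| = ∫ x in p..q, |a * x + b| := by
    rw [intervalIntegral.integral_of_le hpq, integral_Icc_eq_integral_Ioc]
  rw [hicc]
  calc c / (2*N) = (q - p) * c / 2 := by rw [hqp]; ring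
    _ ≤ _ := hkey

lemma elog2_mono {a b : ℕ∞} (h : a ≤ b) : elog2 a ≤ elog2 b := by
  unfold elog2
  rcases eq_or_ne b ⊤ with hb | hb
  · rw [hb, if_pos rfl]; exact le_top
  · have ha : a ≠ ⊤ := fun h' => hb (top_le_iff.mp (h' ▸ h))
    rw [if_neg ha, if_neg hb]
    apply ENNReal.ofReal_le_ofReal
    have htn : a.toNat ≤ b.toNat := ENat.toNat_le_toNat h hb
    rcases Nat.eq_zero_or_pos a.toNat with h0 | h0
    · rw [h0]
      simp only [Nat.cast_zero, Real.logb_zero]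
      rcases Nat.eq_zero_or_pos b.toNat with hb0 | hb0
      · rw [hb0]; simp
      · exact Real.logb_nonneg (by norm_num) (by exact_mod_cast hb0)
    · exact Real.logb_le_logb_of_le (by norm_num) (by exact_mod_cast h0)
        (by exact_mod_cast htn)

lemma nat_gap {c : ℝ} (hc : 0 < c) {α β : ℕ} (h : α ≠ β) :
    c ≤ |c * (α:ℝ) - c * (β:ℝ)| := by
  have h1 : (1:ℝ) ≤ |(α:ℝ) - β| := by
    rcases h.lt_or_gt with h2 | h2
    · have : (α:ℝ) + 1 ≤ β := by exact_mod_cast h2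
      rw [abs_of_nonpos (by linarith)]; linarith
    · have : (β:ℝ) + 1 ≤ α := by exact_mod_cast h2
      rw [abs_of_nonneg (by linarith)]; linarith
  calc c = c * 1 := (mul_one c).symm
    _ ≤ c * |(α:ℝ) - β| := mul_le_mul_of_nonneg_left h1 (le_of_lt hc)
    _ = |c * (α:ℝ) - c * β| := by rw [← mul_sub, abs_mul, abs_of_pos hc]

def uvalN (N m : ℕ) (σ : Fin N → Fin m) (k : ℕ) : ℕ :=
  if h : 1 ≤ k ∧ k ≤ N then (σ ⟨k - 1, by omega⟩ : ℕ) else 0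

def wN (N m : ℕ) (c : ℝ) (σ : Fin N → Fin m) (k : ℕ) : ℝ :=
  c * uvalN N m σ k

lemma wN_zero (N m : ℕ) (c : ℝ) (σ : Fin N → Fin m) : wN N m c σ 0 = 0 := by
  simp [wN, uvalN]

lemma uvalN_lt (N m : ℕ) (hm : 1 ≤ m) (σ : Fin N → Fin m) (k : ℕ) :
    uvalN N m σ k < m := by
  unfold uvalN
  split
  · exact Fin.is_lt _
  · omega

lemma uvalN_succ (N m : ℕ) (σ : Fin N → Fin m) (i : Fin N) :
    uvalN N m σ (i + 1) = σ i := by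
  unfold uvalN
  rw [dif_pos ⟨by omega, by omega⟩]
  exact congrArg Fin.val (congrArg σ (Fin.ext (by simp)))


/-- Packing number lower bound for bounded continuous piecewise linear
functions: `log M(ε, Σ(X_N, E), L¹([0,1])) ≥ N · log ⌈E/(4εN)⌉`. -/
theorem packing_lower_bound_piecewise_linear
    (N : ℕ) (ε E : ℝ) (hN : 2 ≤ N) (hε : 0 < ε) (hE : 0 < E) :
    ENNReal.ofReal ((N : ℝ) * Real.logb 2 ((⌈E / (4 * ε * N)⌉₊ : ℕ) : ℝ))
      ≤ elog2 (packingNumber (ENNReal.ofReal ε) (SigmaClass N E) (intervalDist 1)) := by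
  classical
  have hN1 : 1 ≤ N := le_trans (by norm_num) hN
  have hN0 : (0:ℝ) < N := by exact_mod_cast Nat.lt_of_lt_of_le Nat.zero_lt_one hN1
  set m := ⌈E / (4 * ε * N)⌉₊ with hmdef
  set c : ℝ := 4 * ε * N with hcdef
  have hc : 0 < c := by rw [hcdef]; positivity
  have hm1 : 1 ≤ m := by
    rw [hmdef]
    exact Nat.one_le_ceil_iff.mpr (div_pos hE hc)
  have hmE : c * ((m:ℝ) - 1) ≤ E := by
    have h1 : (m:ℝ) < E / c + 1 := Nat.ceil_lt_add_one (le_of_lt (div_pos hE hc))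
    have h2 : (m:ℝ) - 1 < E / c := by linarith
    have := (lt_div_iff₀' hc).mp h2
    linarith
  set F : (Fin N → Fin m) → ℝ → ℝ := fun σ => pwl N (wN N m c σ) with hF
  have hmem : ∀ σ, F σ ∈ SigmaClass N E := by
    intro σ
    apply pwl_mem_sigmaClass N hN1 _ (wN_zero N m c σ) E
    intro i _
    constructor
    · exact mul_nonneg (le_of_lt hc) (Nat.cast_nonneg _)
    · have hlt : uvalN N m σ i < m := uvalN_lt N m hm1 σ i
      have hcast : (uvalN N m σ i : ℝ) ≤ (m:ℝ) - 1 := by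
        have : (uvalN N m σ i : ℝ) + 1 ≤ m := by exact_mod_cast hlt
        linarith
      calc wN N m c σ i = c * (uvalN N m σ i : ℝ) := rfl
        _ ≤ c * ((m:ℝ) - 1) := mul_le_mul_of_nonneg_left hcast (le_of_lt hc)
        _ ≤ E := hmE
  have hdist : ∀ σ τ : Fin N → Fin m, σ ≠ τ →
      ENNReal.ofReal ε < intervalDist 1 (F σ) (F τ) := by
    intro σ τ hne
    obtain ⟨i, hi⟩ := Function.ne_iff.mp hne
    have hd := dist_lower N c hc (wN N m c σ) (wN N m c τ) (wN_zero N m c σ)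
      (wN_zero N m c τ) i i.isLt ?_ ?_
    · refine lt_of_lt_of_le ?_ hd
      rw [ENNReal.ofReal_lt_ofReal_iff (by positivity)]
      have h2N : c / (2*N) = 2 * ε := by rw [hcdef]; field_simp; ring
      rw [h2N]; linarith
    · rcases eq_or_ne (uvalN N m σ i) (uvalN N m τ i) with h | h
      · left; show c * _ - c * _ = 0; rw [h]; ring
      · right; exact nat_gap hc h
    · have e1 : uvalN N m σ (i + 1) = σ i := uvalN_succ N m σ i
      have e2 : uvalN N m τ (i + 1) = τ i := uvalN_succ N m τ i
      have hne' : uvalN N m σ (i+1) ≠ uvalN N m τ (i+1) := by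
        rw [e1, e2]
        exact fun h => hi (Fin.ext h)
      exact nat_gap hc hne'
  have hinj : Function.Injective F := by
    intro σ τ h
    by_contra hne
    have h1 := hdist σ τ hne
    rw [h] at h1
    have h2 : intervalDist 1 (F τ) (F τ) = 0 := by
      show eLpNorm _ _ _ = 0
      rw [sub_self, eLpNorm_zero]
    rw [h2] at h1
    simp at h1
  have hpack : ((m ^ N : ℕ) : ℕ∞)
      ≤ packingNumber (ENNReal.ofReal ε) (SigmaClass N E) (intervalDist 1) := by
    apply le_sSup
    refine ⟨Finset.image F Finset.univ, ?_, ?_, ?_⟩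
    · intro f hf
      simp only [Finset.coe_image, Set.mem_image] at hf
      obtain ⟨σ, _, rfl⟩ := hf
      exact hmem σ
    · intro x hx y hy hxy
      simp only [Finset.mem_image, Finset.mem_univ, true_and] at hx hy
      obtain ⟨σ, rfl⟩ := hx
      obtain ⟨τ, rfl⟩ := hy
      exact hdist σ τ (fun h => hxy (by rw [h]))
    · rw [Finset.card_image_of_injective _ hinj]
      simp
  calc ENNReal.ofReal ((N : ℝ) * Real.logb 2 ((m : ℕ) : ℝ))
      = elog2 ((m ^ N : ℕ) : ℕ∞) := by
        rw [elog2, if_neg (by exact_mod_cast WithTop.natCast_ne_top _)]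
        congr 1
        rw [show ((((m ^ N : ℕ) : ℕ∞)).toNat) = m ^ N from ENat.toNat_coe _]
        push_cast
        rw [Real.logb_pow]
    _ ≤ _ := elog2_mono hpack
end
end

section
/- Let (X, δ) be a metric space, let F, G ⊆ X, and let ε ∈ ℝ_+. If the minimax approximation error satisfies A(G, F, δ) = sup_{g∈G} inf_{f∈F} δ(f,g) ≤ ε, then the covering numbers satisfy N(ε, F, δ) ≥ N(4ε, G, δ). -/
open ENNReal

noncomputable section

/-- If every element of `G` can be approximated by an element of `F` to
within `ε`, then `N(ε, F, δ) ≥ N(4ε, G, δ)`. -/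
theorem covering_of_approximating_class {X : Type*} [MetricSpace X]
    (F G : Set X) (ε : ℝ) (hε : 0 < ε)
    (h : minimaxErr G F (fun a b => edist a b) ≤ ENNReal.ofReal ε) :
    coveringNumber (ENNReal.ofReal (4 * ε)) G (fun a b => edist a b)
      ≤ coveringNumber (ENNReal.ofReal ε) F (fun a b => edist a b) := by
  classical
  apply le_sInf
  rintro n ⟨C, hCF, hcov, rfl⟩
  -- every g ∈ G has an inf-distance to F at most ε
  have hinf : ∀ g ∈ G, (⨅ f ∈ F, edist f g) ≤ ENNReal.ofReal ε := by
    intro g hg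
    exact le_trans (le_iSup₂ (f := fun g _ => ⨅ f ∈ F, edist f g) g hg) h
  have h2ε : ENNReal.ofReal ε + ENNReal.ofReal ε = ENNReal.ofReal (2 * ε) := by
    rw [← ENNReal.ofReal_add hε.le hε.le]; ring_nf
  -- Claim: every g ∈ G is within 2ε of some c ∈ C
  have claim : ∀ g ∈ G, ∃ c ∈ C, edist g c ≤ ENNReal.ofReal (2 * ε) := by
    intro g hg
    by_contra hc
    push_neg at hc
    rcases C.eq_empty_or_nonempty with hCe | hCne
    · -- C empty : get some f ∈ F, contradicting the cover condition
      have : (⨅ f ∈ F, edist f g) < ⊤ :=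
        lt_of_le_of_lt (hinf g hg) ENNReal.ofReal_lt_top
      simp only [iInf_lt_iff] at this
      obtain ⟨f, hfF, -⟩ := this
      obtain ⟨c, hcC, -⟩ := hcov f hfF
      simp [hCe] at hcC
    · obtain ⟨c₀, hc₀C, hmin⟩ := C.exists_min_image (fun c => edist g c) hCne
      set m := edist g c₀ with hm
      have hlt : ENNReal.ofReal (2 * ε) < m := hc c₀ hc₀C
      have hεm : ENNReal.ofReal ε < m - ENNReal.ofReal ε := by
        rw [lt_tsub_iff_right, h2ε]; exact hlt
      have hεlem : ENNReal.ofReal ε ≤ m :=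
        le_of_lt (lt_of_le_of_lt (ENNReal.ofReal_le_ofReal (by linarith)) hlt)
      have hfex : (⨅ f ∈ F, edist f g) < m - ENNReal.ofReal ε :=
        lt_of_le_of_lt (hinf g hg) hεm
      simp only [iInf_lt_iff] at hfex
      obtain ⟨f, hfF, hfg⟩ := hfex
      obtain ⟨c, hcC, hfc⟩ := hcov f hfF
      have hgc : edist g c < m := by
        calc edist g c ≤ edist g f + edist f c := edist_triangle g f c
          _ ≤ edist g f + ENNReal.ofReal ε := by gcongr
          _ < (m - ENNReal.ofReal ε) + ENNReal.ofReal ε := by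
              rw [edist_comm g f]
              exact ENNReal.add_lt_add_right ENNReal.ofReal_ne_top hfg
          _ = m := tsub_add_cancel_of_le hεlem
      exact absurd (hmin c hcC) (not_le.mpr hgc)
  -- build the cover of G
  set P : X → Prop := fun c => ∃ g ∈ G, edist g c ≤ ENNReal.ofReal (2 * ε) with hP
  set φ : X → X := fun c => if hc : P c then hc.choose else c with hφ
  set D : Finset X := (C.filter P).image φ with hD
  have hφG : ∀ c, P c → φ c ∈ G ∧ edist (φ c) c ≤ ENNReal.ofReal (2 * ε) := by
    intro c hcP
    simp only [hφ, dif_pos hcP]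
    obtain ⟨h1, h2⟩ := hcP.choose_spec
    exact ⟨h1, h2⟩
  have hDG : ↑D ⊆ G := by
    intro x hx
    simp only [hD, Finset.coe_image, Set.mem_image, Finset.mem_coe, Finset.mem_filter] at hx
    obtain ⟨c, ⟨-, hcP⟩, rfl⟩ := hx
    exact (hφG c hcP).1
  have hDcov : ∀ g ∈ G, ∃ d ∈ D, edist g d ≤ ENNReal.ofReal (4 * ε) := by
    intro g hg
    obtain ⟨c, hcC, hgc⟩ := claim g hg
    have hcP : P c := ⟨g, hg, hgc⟩
    refine ⟨φ c, Finset.mem_image_of_mem φ (Finset.mem_filter.mpr ⟨hcC, hcP⟩), ?_⟩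
    calc edist g (φ c) ≤ edist g c + edist c (φ c) := edist_triangle _ _ _
      _ ≤ ENNReal.ofReal (2 * ε) + ENNReal.ofReal (2 * ε) := by
          rw [edist_comm c (φ c)]
          exact add_le_add hgc (hφG c hcP).2
      _ = ENNReal.ofReal (4 * ε) := by
          rw [← ENNReal.ofReal_add (by linarith) (by linarith)]; ring_nf
  refine le_trans (sInf_le ⟨D, hDG, hDcov, rfl⟩) ?_
  exact_mod_cast (Finset.card_image_le.trans (Finset.card_filter_le C P))
end
end

section
/- There exists an absolute constant c ∈ ℝ_+ such that for every p ∈ [1,∞] and all W, L ∈ ℕ with W ≥ 2, the minimax error in approximating 1-Lipschitz functions bounded by 1 through ReLU networks with weights bounded by 1 satisfies A(H^1([0,1]), R(1,W,L,1), ‖·‖_{L^p([0,1])}) ≥ min{ 1/8, c · (W² L² log(W))^{−1} }. -/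
open MeasureTheory ProbabilityTheory ENNReal

noncomputable section

/-- `H¹([0,1])`: continuous functions on `[0,1]` bounded by 1 and 1-Lipschitz. -/
def H1 : Set (ℝ → ℝ) :=
  {f | ContinuousOn f (Set.Icc 0 1) ∧ (∀ x ∈ Set.Icc (0 : ℝ) 1, |f x| ≤ 1) ∧
    ∀ x ∈ Set.Icc (0 : ℝ) 1, ∀ y ∈ Set.Icc (0 : ℝ) 1, |f x - f y| ≤ |x - y|}

/-- View a function on `ℝ^1` as a function of one real variable. -/
def toOneVar (g : (Fin 1 → ℝ) → ℝ) : ℝ → ℝ := fun t => g fun _ => t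

/-- `R(1,W,L,B)` viewed as a set of functions of one real variable. -/
def RclassB₁ (W L : ℕ) (B : ℝ) : Set (ℝ → ℝ) := toOneVar '' RclassB 1 W L B

/-- `R(1,W,L)` (no weight-magnitude constraint) viewed as a set of functions of
one real variable. -/
def Rclass₁ (W L : ℕ) : Set (ℝ → ℝ) := toOneVar '' Rclass 1 W L

def hatF (N i : ℕ) (x : ℝ) : ℝ := max 0 (1/(2*N) - |x - (2*i+1)/(2*N)|)

def gsaw (N : ℕ) (σ : Fin N → Bool) (x : ℝ) : ℝ :=
  ∑ i : Fin N, (if σ i then (1:ℝ) else -1) * hatF N i x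

variable {N : ℕ}

lemma hatF_nonneg (i : ℕ) (x : ℝ) : 0 ≤ hatF N i x := le_max_left _ _

lemma hatF_le (i : ℕ) (x : ℝ) : hatF N i x ≤ 1/(2*N) := by
  apply max_le
  · positivity
  · have : 0 ≤ |x - (2*i+1)/(2*N)| := abs_nonneg _
    linarith

lemma hatF_lip (i : ℕ) (x y : ℝ) : |hatF N i x - hatF N i y| ≤ |x - y| := by
  have h1 : |(1/(2*(N:ℝ)) - |x - (2*i+1)/(2*N)|) - (1/(2*N) - |y - (2*i+1)/(2*N)|)| ≤ |x - y| := by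
    rw [show (1/(2*(N:ℝ)) - |x - (2*i+1)/(2*N)|) - (1/(2*N) - |y - (2*i+1)/(2*N)|)
      = |y - (2*i+1)/(2*N)| - |x - (2*i+1)/(2*N)| by ring]
    have := abs_abs_sub_abs_le_abs_sub (y - (2*i+1)/(2*(N:ℝ))) (x - (2*i+1)/(2*N))
    have h2 : y - (2*i+1)/(2*(N:ℝ)) - (x - (2*i+1)/(2*N)) = y - x := by ring
    rw [h2] at this
    rwa [abs_sub_comm y x] at this
  have h0 : |hatF N i x - hatF N i y|
      ≤ |(1/(2*(N:ℝ)) - |x - (2*i+1)/(2*N)|) - (1/(2*N) - |y - (2*i+1)/(2*N)|)| := by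
    unfold hatF
    rw [max_comm (0:ℝ), max_comm (0:ℝ)]
    exact abs_max_sub_max_le_abs _ _ _
  exact h0.trans h1

lemma hatF_eq_zero {i : ℕ} {x : ℝ} (h : 1/(2*(N:ℝ)) ≤ |x - (2*i+1)/(2*N)|) : hatF N i x = 0 := by
  unfold hatF; rw [max_eq_left]; linarith

lemma hatF_eq_zero_left {i : ℕ} {x : ℝ} (hN : 0 < N) (h : x ≤ (i:ℝ)/N) : hatF N i x = 0 := by
  have hNp : (0:ℝ) < N := by exact_mod_cast hN
  have he : (i:ℝ)/N - (2*i+1)/(2*N) = -(1/(2*N)) := by field_simp; ring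
  exact hatF_eq_zero (le_abs.mpr (Or.inr (by linarith)))

lemma hatF_eq_zero_right {i : ℕ} {x : ℝ} (hN : 0 < N) (h : ((i:ℝ)+1)/N ≤ x) : hatF N i x = 0 := by
  have hNp : (0:ℝ) < N := by exact_mod_cast hN
  have he : ((i:ℝ)+1)/N - (2*i+1)/(2*N) = 1/(2*N) := by field_simp; ring
  exact hatF_eq_zero (le_abs.mpr (Or.inl (by linarith)))

/-- At most one hat is nonzero: collapse the sum on a cell. -/
lemma gsaw_eq_on_cell (hN : 0 < N) (σ : Fin N → Bool) (i : Fin N) {x : ℝ}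
    (hx : (i:ℝ)/N ≤ x) (hx' : x ≤ ((i:ℝ)+1)/N) :
    gsaw N σ x = (if σ i then (1:ℝ) else -1) * hatF N i x := by
  unfold gsaw
  apply Finset.sum_eq_single_of_mem i (Finset.mem_univ i)
  intro j _ hji
  have hNp : (0:ℝ) < N := by exact_mod_cast hN
  rcases lt_or_gt_of_ne (fun h => hji (Fin.ext h) : (j:ℕ) ≠ (i:ℕ)) with hlt | hgt
  · have hji' : ((j:ℝ)+1) ≤ (i:ℝ) := by exact_mod_cast hlt
    have : ((j:ℝ)+1)/N ≤ x := le_trans (by gcongr) hx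
    simp [hatF_eq_zero_right hN this]
  · have hji' : ((i:ℝ)+1) ≤ (j:ℝ) := by exact_mod_cast hgt
    have : x ≤ ((j:ℝ))/N := le_trans hx' (by gcongr)
    simp [hatF_eq_zero_left hN this]


lemma exists_cell (hN : 0 < N) {x : ℝ} (hx0 : 0 ≤ x) (hx1 : x ≤ 1) :
    ∃ i : Fin N, (i:ℝ)/N ≤ x ∧ x ≤ ((i:ℝ)+1)/N := by
  have hNp : (0:ℝ) < N := by exact_mod_cast hN
  by_cases h1 : (N:ℝ) ≤ N*x
  · have hx1' : x = 1 := le_antisymm hx1 (by nlinarith)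
    refine ⟨⟨N-1, Nat.sub_lt hN one_pos⟩, ?_, ?_⟩
    · have hc : ((N-1:ℕ):ℝ) = (N:ℝ) - 1 := by
        rw [Nat.cast_sub hN]; simp
      rw [hx1']
      simp only [hc]
      rw [div_le_one hNp]; linarith
    · have hc : ((N-1:ℕ):ℝ) = (N:ℝ) - 1 := by
        rw [Nat.cast_sub hN]; simp
      rw [hx1']
      simp only [hc]
      rw [le_div_iff₀ hNp]; linarith
  · push_neg at h1
    have hnn : (0:ℝ) ≤ (N:ℝ)*x := by positivity
    have hfl : 0 ≤ ⌊(N:ℝ)*x⌋ := Int.floor_nonneg.mpr hnn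
    have hlow : ((⌊(N:ℝ)*x⌋.toNat : ℝ)) ≤ (N:ℝ)*x := by
      have h2 : ((⌊(N:ℝ)*x⌋.toNat : ℤ):ℝ) = (⌊(N:ℝ)*x⌋ : ℝ) := by
        rw [Int.toNat_of_nonneg hfl]
      push_cast at h2
      rw [h2]
      exact Int.floor_le _
    have hup : (N:ℝ)*x < (⌊(N:ℝ)*x⌋.toNat : ℝ) + 1 := by
      have := Int.lt_floor_add_one ((N:ℝ)*x)
      have h2 : ((⌊(N:ℝ)*x⌋.toNat : ℤ):ℝ) = (⌊(N:ℝ)*x⌋ : ℝ) := by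
        rw [Int.toNat_of_nonneg hfl]
      push_cast at h2 ⊢
      linarith
    have hlt : ⌊(N:ℝ)*x⌋.toNat < N := by
      by_contra hge
      push_neg at hge
      have : (N:ℝ) ≤ (⌊(N:ℝ)*x⌋.toNat : ℝ) := by exact_mod_cast hge
      linarith
    refine ⟨⟨_, hlt⟩, ?_, ?_⟩
    · rw [div_le_iff₀ hNp]; simpa [mul_comm] using hlow
    · rw [le_div_iff₀ hNp]; simp only []; nlinarith [hup]

lemma gsaw_abs_le (hN : 0 < N) (σ : Fin N → Bool) (x : ℝ) : |gsaw N σ x| ≤ 1 := by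
  have hNp : (0:ℝ) < N := by exact_mod_cast hN
  calc |gsaw N σ x| ≤ ∑ i : Fin N, |(if σ i then (1:ℝ) else -1) * hatF N i x| :=
        Finset.abs_sum_le_sum_abs _ _
    _ ≤ ∑ _i : Fin N, 1/(2*(N:ℝ)) := by
        apply Finset.sum_le_sum
        intro i _
        rw [abs_mul]
        have h1 : |(if σ i then (1:ℝ) else -1)| = 1 := by split <;> simp
        rw [h1, one_mul, abs_of_nonneg (hatF_nonneg i x)]
        exact hatF_le i x
    _ = (N:ℝ)/(2*N) := by simp [Finset.sum_const]; ring
    _ ≤ 1 := by rw [div_le_one (by positivity)]; linarith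

lemma hatF_le_right {i : ℕ} {x : ℝ} (hN : 0 < N) (h : x ≤ ((i:ℝ)+1)/N) :
    hatF N i x ≤ ((i:ℝ)+1)/N - x := by
  have hNp : (0:ℝ) < N := by exact_mod_cast hN
  have he : (2*(i:ℝ)+1)/(2*N) + 1/(2*N) = ((i:ℝ)+1)/N := by field_simp; ring
  apply max_le (by linarith)
  have := le_abs_self (x - (2*(i:ℝ)+1)/(2*N))
  linarith

lemma hatF_le_left {i : ℕ} {x : ℝ} (hN : 0 < N) (h : (i:ℝ)/N ≤ x) :
    hatF N i x ≤ x - (i:ℝ)/N := by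
  have hNp : (0:ℝ) < N := by exact_mod_cast hN
  have he : (2*(i:ℝ)+1)/(2*N) - 1/(2*N) = (i:ℝ)/N := by field_simp; ring
  apply max_le (by linarith)
  have := neg_abs_le (x - (2*(i:ℝ)+1)/(2*N))
  linarith

lemma gsaw_lip_aux (hN : 0 < N) (σ : Fin N → Bool) {x y : ℝ} (i j : Fin N)
    (hij : (i:ℕ) < (j:ℕ))
    (hxl : (i:ℝ)/N ≤ x) (hxr : x ≤ ((i:ℝ)+1)/N)
    (hyl : (j:ℝ)/N ≤ y) (hyr : y ≤ ((j:ℝ)+1)/N) :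
    |gsaw N σ x - gsaw N σ y| ≤ |x - y| := by
  have hNp : (0:ℝ) < N := by exact_mod_cast hN
  rw [gsaw_eq_on_cell hN σ i hxl hxr, gsaw_eq_on_cell hN σ j hyl hyr]
  have hij' : ((i:ℝ)+1) ≤ (j:ℝ) := by exact_mod_cast hij
  have h1 : hatF N (i:ℕ) x ≤ ((i:ℝ)+1)/N - x := hatF_le_right hN hxr
  have h2 : hatF N (j:ℕ) y ≤ y - (j:ℝ)/N := hatF_le_left hN hyl
  have hxy : x ≤ y := by
    calc x ≤ ((i:ℝ)+1)/N := hxr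
      _ ≤ (j:ℝ)/N := by gcongr
      _ ≤ y := hyl
  have habs : |x - y| = y - x := by rw [abs_sub_comm, abs_of_nonneg (by linarith)]
  rw [habs]
  have hs1 : |(if σ i then (1:ℝ) else -1)| = 1 := by split <;> simp
  have hs2 : |(if σ j then (1:ℝ) else -1)| = 1 := by split <;> simp
  calc |(if σ i then (1:ℝ) else -1) * hatF N i x - (if σ j then (1:ℝ) else -1) * hatF N j y|
      ≤ |(if σ i then (1:ℝ) else -1) * hatF N i x| + |(if σ j then (1:ℝ) else -1) * hatF N j y| :=
        abs_sub _ _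
    _ = hatF N i x + hatF N j y := by
        rw [abs_mul, abs_mul, hs1, hs2, one_mul, one_mul,
          abs_of_nonneg (hatF_nonneg _ _), abs_of_nonneg (hatF_nonneg _ _)]
    _ ≤ (((i:ℝ)+1)/N - x) + (y - (j:ℝ)/N) := by linarith
    _ ≤ y - x := by
        have : ((i:ℝ)+1)/N ≤ (j:ℝ)/N := by gcongr
        linarith

lemma gsaw_lip (hN : 0 < N) (σ : Fin N → Bool) {x y : ℝ}
    (hx0 : 0 ≤ x) (hx1 : x ≤ 1) (hy0 : 0 ≤ y) (hy1 : y ≤ 1) :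
    |gsaw N σ x - gsaw N σ y| ≤ |x - y| := by
  obtain ⟨i, hxl, hxr⟩ := exists_cell hN hx0 hx1
  obtain ⟨j, hyl, hyr⟩ := exists_cell hN hy0 hy1
  rcases lt_trichotomy (i:ℕ) (j:ℕ) with h | h | h
  · exact gsaw_lip_aux hN σ i j h hxl hxr hyl hyr
  · have hij : i = j := Fin.ext h
    subst hij
    rw [gsaw_eq_on_cell hN σ i hxl hxr, gsaw_eq_on_cell hN σ i hyl hyr,
      ← mul_sub, abs_mul]
    have hs1 : |(if σ i then (1:ℝ) else -1)| = 1 := by split <;> simp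
    rw [hs1, one_mul]
    exact hatF_lip i x y
  · rw [abs_sub_comm, abs_sub_comm x y]
    exact gsaw_lip_aux hN σ j i h hyl hyr hxl hxr

lemma gsaw_sep (hN : 0 < N) {σ τ : Fin N → Bool} (i : Fin N) (hστ : σ i ≠ τ i) {x : ℝ}
    (hx : (i:ℝ)/N + 1/(4*N) ≤ x) (hx' : x ≤ (i:ℝ)/N + 3/(4*N)) :
    1/(2*(N:ℝ)) ≤ |gsaw N σ x - gsaw N τ x| := by
  have hNp : (0:ℝ) < N := by exact_mod_cast hN
  have hxl : (i:ℝ)/N ≤ x := by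
    have : (0:ℝ) < 1/(4*N) := by positivity
    linarith
  have hxr : x ≤ ((i:ℝ)+1)/N := by
    have he : ((i:ℝ)+1)/N = (i:ℝ)/N + 1/N := by field_simp
    have h34 : 3/(4*(N:ℝ)) ≤ 1/N := by rw [div_le_div_iff₀ (by positivity) hNp]; linarith
    linarith
  rw [gsaw_eq_on_cell hN σ i hxl hxr, gsaw_eq_on_cell hN τ i hxl hxr, ← sub_mul, abs_mul]
  have hs : |(if σ i then (1:ℝ) else -1) - (if τ i then (1:ℝ) else -1)| = 2 := by
    rcases Bool.eq_false_or_eq_true (σ i) with h1 | h1 <;>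
      rcases Bool.eq_false_or_eq_true (τ i) with h2 | h2 <;>
      simp [h1, h2] at hστ ⊢ <;> norm_num
  rw [hs]
  have hc : |x - (2*(i:ℝ)+1)/(2*N)| ≤ 1/(4*N) := by
    have he : (2*(i:ℝ)+1)/(2*N) = (i:ℝ)/N + 1/(2*N) := by field_simp
    rw [abs_le]
    constructor
    · have h1 : (1:ℝ)/(2*N) - 1/(4*N) = 1/(4*N) := by field_simp; ring
      rw [he]; linarith
    · have h1 : (3:ℝ)/(4*N) - 1/(2*N) = 1/(4*N) := by field_simp; ring
      rw [he]; linarith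
  have hhat : 1/(4*(N:ℝ)) ≤ hatF N i x := by
    have h1 : (1:ℝ)/(2*N) - 1/(4*N) = 1/(4*N) := by field_simp; ring
    refine le_trans ?_ (le_max_right _ _)
    linarith
  have h2 : (2:ℝ) * (1/(4*N)) = 1/(2*N) := by field_simp; ring
  rw [abs_of_nonneg (hatF_nonneg _ _)]
  nlinarith [hatF_nonneg (N:=N) i x]

lemma gsaw_continuous (σ : Fin N → Bool) : Continuous (gsaw N σ) := by
  unfold gsaw hatF
  fun_prop

open Finset in
lemma hamming_ball_card (N D : ℕ) (c : Fin N → Bool) :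
    ((Finset.univ : Finset (Fin N → Bool)).filter fun σ => hammingDist σ c < D).card
      ≤ ∑ k ∈ Finset.range D, N.choose k := by
  classical
  set T : Finset (Finset (Fin N)) :=
    (Finset.range D).biUnion (fun k => Finset.powersetCard k Finset.univ) with hT
  have hTcard : T.card ≤ ∑ k ∈ Finset.range D, N.choose k := by
    refine le_trans (Finset.card_biUnion_le) ?_
    apply Finset.sum_le_sum
    intro k _
    rw [Finset.card_powersetCard, Finset.card_univ, Fintype.card_fin]
  refine le_trans ?_ hTcard
  apply Finset.card_le_card_of_injOn
    (fun σ => Finset.univ.filter fun i => σ i ≠ c i)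
  · intro σ hσ
    simp only [Finset.mem_coe, Finset.mem_filter, Finset.mem_univ, true_and] at hσ
    simp only [Finset.mem_coe, hT, Finset.mem_biUnion, Finset.mem_range, Finset.mem_powersetCard]
    exact ⟨_, hσ, Finset.subset_univ _, rfl⟩
  · intro σ _ τ _ h
    funext i
    have hi : (i ∈ Finset.univ.filter fun i => σ i ≠ c i)
        ↔ (i ∈ Finset.univ.filter fun i => τ i ≠ c i) := by
      rw [show (Finset.univ.filter fun i => σ i ≠ c i)
        = (Finset.univ.filter fun i => τ i ≠ c i) from h]
    simp only [Finset.mem_filter, Finset.mem_univ, true_and] at hi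
    rcases Bool.eq_false_or_eq_true (σ i) with h1 | h1 <;>
      rcases Bool.eq_false_or_eq_true (τ i) with h2 | h2 <;>
      rcases Bool.eq_false_or_eq_true (c i) with h3 | h3 <;>
      simp [h1, h2, h3] at hi ⊢

open Finset in
lemma gv_code (N D : ℕ) (hD : 0 < D) :
    ∃ S : Finset (Fin N → Bool),
      (∀ σ ∈ S, ∀ τ ∈ S, σ ≠ τ → D ≤ hammingDist σ τ) ∧
      2^N ≤ S.card * ∑ k ∈ Finset.range D, N.choose k := by
  classical
  set coll : Finset (Finset (Fin N → Bool)) :=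
    Finset.univ.filter (fun S : Finset (Fin N → Bool) =>
      ∀ σ ∈ S, ∀ τ ∈ S, σ ≠ τ → D ≤ hammingDist σ τ) with hcoll
  have hne : coll.Nonempty := ⟨∅, by simp [hcoll]⟩
  obtain ⟨S, hS, hmax⟩ := Finset.exists_max_image coll Finset.card hne
  simp only [hcoll, Finset.mem_filter, Finset.mem_univ, true_and] at hS
  refine ⟨S, hS, ?_⟩
  have hcover : ∀ σ : Fin N → Bool, ∃ c ∈ S, hammingDist σ c < D := by
    intro σ
    by_contra hno
    push_neg at hno
    have hσS : σ ∉ S := fun h => by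
      have := hno σ h
      simp [hammingDist_self] at this
      omega
    have hins : insert σ S ∈ coll := by
      simp only [hcoll, Finset.mem_filter, Finset.mem_univ, true_and]
      intro a ha b hb hab
      rcases Finset.mem_insert.mp ha with rfl | ha' <;>
        rcases Finset.mem_insert.mp hb with rfl | hb'
      · exact absurd rfl hab
      · exact hno b hb'
      · rw [hammingDist_comm]; exact hno a ha'
      · exact hS a ha' b hb' hab
    have := hmax _ hins
    rw [Finset.card_insert_of_notMem hσS] at this
    omega
  calc 2^N = (Finset.univ : Finset (Fin N → Bool)).card := by
        rw [Finset.card_univ, Fintype.card_fun]; simp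
    _ ≤ (S.biUnion (fun c => Finset.univ.filter fun σ => hammingDist σ c < D)).card := by
        apply Finset.card_le_card
        intro σ _
        obtain ⟨c, hc, hdist⟩ := hcover σ
        exact Finset.mem_biUnion.mpr ⟨c, hc, by simp [hdist]⟩
    _ ≤ ∑ c ∈ S, ((Finset.univ : Finset (Fin N → Bool)).filter
          fun σ => hammingDist σ c < D).card := Finset.card_biUnion_le
    _ ≤ ∑ _c ∈ S, ∑ k ∈ Finset.range D, N.choose k :=
        Finset.sum_le_sum fun c _ => hamming_ball_card N D c
    _ = S.card * ∑ k ∈ Finset.range D, N.choose k := by rw [Finset.sum_const, smul_eq_mul]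

lemma succ_pow_le_three_mul (m : ℕ) : (m+1)^m ≤ 3 * m^m := by
  rcases Nat.eq_zero_or_pos m with rfl | hm
  · simp
  have hmr : (0:ℝ) < m := by exact_mod_cast hm
  have key : ((m:ℝ)+1)^m ≤ 3 * (m:ℝ)^m := by
    have h1 : ((m:ℝ)+1) = (1 + 1/m) * m := by field_simp
    have h2 : (1 + 1/(m:ℝ)) ≤ Real.exp (1/m) := by
      have := Real.add_one_le_exp (1/(m:ℝ))
      linarith
    have h3 : (1 + 1/(m:ℝ))^m ≤ Real.exp (1/m) ^ m := by
      apply pow_le_pow_left₀ (by positivity) h2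
    have h4 : Real.exp (1/(m:ℝ)) ^ m = Real.exp 1 := by
      rw [← Real.exp_nat_mul]
      congr 1
      field_simp
    have h5 : Real.exp 1 ≤ 3 := by
      have := Real.exp_one_lt_d9
      linarith
    calc ((m:ℝ)+1)^m = (1 + 1/(m:ℝ))^m * (m:ℝ)^m := by rw [h1, mul_pow]
      _ ≤ Real.exp 1 * (m:ℝ)^m := by
          rw [h4] at h3
          apply mul_le_mul_of_nonneg_right h3 (by positivity)
      _ ≤ 3 * (m:ℝ)^m := mul_le_mul_of_nonneg_right h5 (by positivity)
  exact_mod_cast (by push_cast; exact key : (((m+1)^m : ℕ) : ℝ) ≤ ((3 * m^m : ℕ) : ℝ))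

lemma pow_self_le_three_pow_mul_factorial (m : ℕ) : m^m ≤ 3^m * Nat.factorial m := by
  induction m with
  | zero => simp
  | succ m ih =>
    calc (m+1)^(m+1) = (m+1) * (m+1)^m := by ring
      _ ≤ (m+1) * (3 * m^m) := Nat.mul_le_mul_left _ (succ_pow_le_three_mul m)
      _ ≤ (m+1) * (3 * (3^m * Nat.factorial m)) := by
          apply Nat.mul_le_mul_left
          exact Nat.mul_le_mul_left _ ih
      _ = 3^(m+1) * Nat.factorial (m+1) := by rw [Nat.factorial_succ]; ring

lemma choose_le_48_pow {N m : ℕ} (hm : 0 < m) (h16 : N ≤ 16 * m) : N.choose m ≤ 48 ^ m := by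
  have h1 : N.choose m * Nat.factorial m ≤ N ^ m := by
    have := Nat.descFactorial_le_pow N m
    rw [Nat.descFactorial_eq_factorial_mul_choose] at this
    rwa [mul_comm]
  have key : N.choose m * m^m ≤ 48^m * m^m := by
    calc N.choose m * m^m ≤ N.choose m * (3^m * Nat.factorial m) :=
          Nat.mul_le_mul_left _ (pow_self_le_three_pow_mul_factorial m)
      _ = 3^m * (N.choose m * Nat.factorial m) := by ring
      _ ≤ 3^m * N^m := Nat.mul_le_mul_left _ h1
      _ = (3*N)^m := by rw [mul_pow]
      _ ≤ (48*m)^m := Nat.pow_le_pow_left (by omega) m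
      _ = 48^m * m^m := by rw [mul_pow]
  have hpos : 0 < m^m := Nat.pow_pos hm
  exact Nat.le_of_mul_le_mul_right key hpos

lemma choose_mono_right {N a b : ℕ} (hab : a ≤ b) (hb : b ≤ N/2) : N.choose a ≤ N.choose b := by
  induction b with
  | zero =>
    have : a = 0 := by omega
    simp [this]
  | succ b ih =>
    rcases Nat.eq_or_lt_of_le hab with rfl | h
    · exact le_refl _
    · have h1 : a ≤ b := by omega
      have h2 : b ≤ N/2 := by omega
      exact le_trans (ih h1 h2) (Nat.choose_le_succ_of_lt_half_left (by omega))

lemma sum_choose_le {N m : ℕ} (hm : m ≤ N/2) :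
    ∑ k ∈ Finset.range (m+1), N.choose k ≤ (m+1) * N.choose m := by
  calc ∑ k ∈ Finset.range (m+1), N.choose k ≤ ∑ _k ∈ Finset.range (m+1), N.choose m := by
        apply Finset.sum_le_sum
        intro k hk
        exact choose_mono_right (by simp at hk; omega) hm
    _ = (m+1) * N.choose m := by rw [Finset.sum_const, Finset.card_range, smul_eq_mul]



lemma forward_continuous {d : ℕ} (Φ : ReLUNet d) :
    ∀ (i : ℕ) (j : Fin (Φ.width i)), Continuous fun x => Φ.forward i x j := by
  intro i
  induction i with
  | zero =>
    intro j
    simpa [ReLUNet.forward] using continuous_apply j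
  | succ i ih =>
    intro j
    show Continuous fun x =>
      Φ.layer i (fun k => if i = 0 then Φ.forward i x k else max (Φ.forward i x k) 0) j
    unfold ReLUNet.layer
    apply Continuous.add ?_ continuous_const
    apply continuous_finset_sum
    intro k _
    apply Continuous.mul continuous_const
    by_cases h : i = 0
    · simp only [h, if_true]
      exact ih k
    · simp only [h, if_false]
      exact (ih k).max continuous_const

lemma realization_continuous (Φ : ReLUNet 1) : Continuous (toOneVar Φ.realization) := by
  unfold toOneVar ReLUNet.realization
  exact (forward_continuous Φ Φ.depth _).comp (continuous_pi fun _ => continuous_id)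


lemma forward_succ {d : ℕ} (Φ : ReLUNet d) (i : ℕ) (x : Fin (Φ.width 0) → ℝ) :
    Φ.forward (i+1) x
      = Φ.layer i fun k => if i = 0 then Φ.forward i x k else max (Φ.forward i x k) 0 := rfl

lemma abs_relu_le (a : ℝ) : |max a 0| ≤ |a| := by
  rw [abs_of_nonneg (le_max_right a 0)]
  exact max_le (le_abs_self a) (abs_nonneg a)

lemma one_le_Wpow (W i : ℕ) : (1:ℝ) ≤ ((W:ℝ)+1)^i := by
  have h0 : (0:ℝ) ≤ (W:ℝ) := Nat.cast_nonneg W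
  calc (1:ℝ) = 1^i := (one_pow i).symm
    _ ≤ ((W:ℝ)+1)^i := pow_le_pow_left₀ zero_le_one (by linarith) i

lemma forward_le {d : ℕ} (Φ : ReLUNet d) (W : ℕ) (hW : Φ.widthLe W) (h1 : Φ.magLe 1)
    (x : Fin (Φ.width 0) → ℝ) (hx : ∀ k, |x k| ≤ 1) :
    ∀ i, i ≤ Φ.depth → ∀ j, |Φ.forward i x j| ≤ ((W:ℝ)+1)^i := by
  intro i
  induction i with
  | zero => intro _ j; simpa [ReLUNet.forward] using hx j
  | succ i ih =>
    intro hi j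
    have hi' : i < Φ.depth := hi
    have hiy : i ≤ Φ.depth := le_of_lt hi'
    have hWp : (0:ℝ) ≤ (W:ℝ) := Nat.cast_nonneg W
    rw [forward_succ]
    unfold ReLUNet.layer
    set y := fun k => if i = 0 then Φ.forward i x k else max (Φ.forward i x k) 0 with hy
    have hyb : ∀ k, |y k| ≤ ((W:ℝ)+1)^i := by
      intro k
      rw [hy]
      split_ifs with h
      · exact ih hiy k
      · exact (abs_relu_le _).trans (ih hiy k)
    have hsum : |∑ k, Φ.A i j k * y k| ≤ (W:ℝ) * ((W:ℝ)+1)^i := by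
      calc |∑ k, Φ.A i j k * y k| ≤ ∑ k, |Φ.A i j k * y k| := Finset.abs_sum_le_sum_abs _ _
        _ ≤ ∑ _k : Fin (Φ.width i), ((W:ℝ)+1)^i := by
            apply Finset.sum_le_sum
            intro k _
            rw [abs_mul]
            have hA : |Φ.A i j k| ≤ 1 := (h1 i hi').1 j k
            calc |Φ.A i j k| * |y k| ≤ 1 * ((W:ℝ)+1)^i :=
                  mul_le_mul hA (hyb k) (abs_nonneg _) zero_le_one
              _ = ((W:ℝ)+1)^i := one_mul _
        _ = (Φ.width i : ℝ) * ((W:ℝ)+1)^i := by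
            rw [Finset.sum_const, Finset.card_univ, Fintype.card_fin, nsmul_eq_mul]
        _ ≤ (W:ℝ) * ((W:ℝ)+1)^i := by
            apply mul_le_mul_of_nonneg_right ?_ (by positivity)
            exact_mod_cast hW i hiy
    have hb : |Φ.b i j| ≤ 1 := (h1 i hi').2 j
    have hpow : (W:ℝ) * ((W:ℝ)+1)^i + 1 ≤ ((W:ℝ)+1)^(i+1) := by
      have h2 := one_le_Wpow W i
      rw [pow_succ]
      nlinarith
    calc |(∑ k, Φ.A i j k * y k) + Φ.b i j| ≤ |∑ k, Φ.A i j k * y k| + |Φ.b i j| := abs_add_le _ _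
      _ ≤ (W:ℝ) * ((W:ℝ)+1)^i + 1 := add_le_add hsum hb
      _ ≤ ((W:ℝ)+1)^(i+1) := hpow

lemma forward_diff {d : ℕ} (Φ Ψ : ReLUNet d) (hd : Φ.depth = Ψ.depth)
    (hw : ∀ i, i ≤ Φ.depth → Φ.width i = Ψ.width i)
    (W : ℕ) (hW : Φ.widthLe W) (hW' : Ψ.widthLe W) (h1 : Φ.magLe 1) (h1' : Ψ.magLe 1)
    (η : ℝ) (hη : 0 ≤ η)
    (hA : ∀ i, (hi : i < Φ.depth) → ∀ (j : Fin (Φ.width (i+1))) (k : Fin (Φ.width i)),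
      |Φ.A i j k - Ψ.A i (Fin.cast (hw (i+1) hi) j) (Fin.cast (hw i (le_of_lt hi)) k)| ≤ η)
    (hb : ∀ i, (hi : i < Φ.depth) → ∀ j : Fin (Φ.width (i+1)),
      |Φ.b i j - Ψ.b i (Fin.cast (hw (i+1) hi) j)| ≤ η)
    (x : Fin (Φ.width 0) → ℝ) (x' : Fin (Ψ.width 0) → ℝ)
    (hx : ∀ k, |x k| ≤ 1) (hx' : ∀ k, |x' k| ≤ 1)
    (hxx : ∀ k : Fin (Φ.width 0), x k = x' (Fin.cast (hw 0 (Nat.zero_le _)) k)) :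
    ∀ i, (hi : i ≤ Φ.depth) → ∀ j : Fin (Φ.width i),
      |Φ.forward i x j - Ψ.forward i x' (Fin.cast (hw i hi) j)| ≤ η * i * ((W:ℝ)+1)^i := by
  intro i
  induction i with
  | zero =>
    intro hi j
    show |x j - x' _| ≤ η * (0:ℕ) * ((W:ℝ)+1)^0
    rw [hxx j]
    simp
  | succ i ih =>
    intro hi j
    have hi' : i < Φ.depth := hi
    have hiy : i ≤ Φ.depth := le_of_lt hi'
    have hWp : (0:ℝ) ≤ (W:ℝ) := Nat.cast_nonneg W
    have hwi := hw i hiy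
    have hwi1 := hw (i+1) hi
    rw [forward_succ, forward_succ]
    unfold ReLUNet.layer
    set y := fun k => if i = 0 then Φ.forward i x k else max (Φ.forward i x k) 0 with hydef
    set y' := fun k => if i = 0 then Ψ.forward i x' k else max (Ψ.forward i x' k) 0 with hydef'
    set D := η * i * ((W:ℝ)+1)^i with hD
    set M := ((W:ℝ)+1)^i with hM
    have hDnn : 0 ≤ D := by positivity
    have hydiff : ∀ k : Fin (Φ.width i), |y k - y' (Fin.cast hwi k)| ≤ D := by
      intro k
      rw [hydef, hydef']
      split_ifs with h
      · exact ih hiy k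
      · exact (abs_max_sub_max_le_abs _ _ _).trans (ih hiy k)
    have hy'b : ∀ k', |y' k'| ≤ M := by
      intro k'
      rw [hydef']
      have hfb := forward_le Ψ W hW' h1' x' hx' i (hd ▸ hiy) k'
      split_ifs with h
      · exact hfb
      · exact (abs_relu_le _).trans hfb
    have hreidx : ∑ k' : Fin (Ψ.width i), Ψ.A i (Fin.cast hwi1 j) k' * y' k'
        = ∑ k : Fin (Φ.width i), Ψ.A i (Fin.cast hwi1 j) (Fin.cast hwi k) * y' (Fin.cast hwi k) :=
      (Fintype.sum_equiv (finCongr hwi)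
        (fun k => Ψ.A i (Fin.cast hwi1 j) (Fin.cast hwi k) * y' (Fin.cast hwi k)) _
        (fun k => rfl)).symm
    show |((∑ k, Φ.A i j k * y k) + Φ.b i j)
        - ((∑ k', Ψ.A i (Fin.cast hwi1 j) k' * y' k') + Ψ.b i (Fin.cast hwi1 j))|
        ≤ η * ((i:ℕ)+1:ℕ) * ((W:ℝ)+1)^(i+1)
    rw [hreidx]
    have hterm : ∀ k : Fin (Φ.width i),
        |Φ.A i j k * y k - Ψ.A i (Fin.cast hwi1 j) (Fin.cast hwi k) * y' (Fin.cast hwi k)|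
          ≤ D + η * M := by
      intro k
      have e1 : Φ.A i j k * y k - Ψ.A i (Fin.cast hwi1 j) (Fin.cast hwi k) * y' (Fin.cast hwi k)
          = Φ.A i j k * (y k - y' (Fin.cast hwi k))
            + (Φ.A i j k - Ψ.A i (Fin.cast hwi1 j) (Fin.cast hwi k)) * y' (Fin.cast hwi k) := by
        ring
      rw [e1]
      have hAb : |Φ.A i j k| ≤ 1 := (h1 i hi').1 j k
      have hAd : |Φ.A i j k - Ψ.A i (Fin.cast hwi1 j) (Fin.cast hwi k)| ≤ η := hA i hi' j k
      calc _ ≤ |Φ.A i j k * (y k - y' (Fin.cast hwi k))|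
            + |(Φ.A i j k - Ψ.A i (Fin.cast hwi1 j) (Fin.cast hwi k)) * y' (Fin.cast hwi k)| :=
            abs_add_le _ _
        _ ≤ 1 * D + η * M := by
            rw [abs_mul, abs_mul]
            apply add_le_add
            · exact mul_le_mul hAb (hydiff k) (abs_nonneg _) zero_le_one
            · exact mul_le_mul hAd (hy'b _) (abs_nonneg _) hη
        _ = D + η * M := by ring
    have hbd : |Φ.b i j - Ψ.b i (Fin.cast hwi1 j)| ≤ η := hb i hi' j
    have hcard : (Φ.width i : ℝ) ≤ (W:ℝ) := by exact_mod_cast hW i hiy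
    have hMnn : (0:ℝ) ≤ M := le_trans zero_le_one (one_le_Wpow W i)
    have hsum : |∑ k : Fin (Φ.width i), Φ.A i j k * y k
        - ∑ k : Fin (Φ.width i), Ψ.A i (Fin.cast hwi1 j) (Fin.cast hwi k) * y' (Fin.cast hwi k)|
        ≤ (W:ℝ) * (D + η * M) := by
      rw [← Finset.sum_sub_distrib]
      calc _ ≤ ∑ k : Fin (Φ.width i),
            |Φ.A i j k * y k - Ψ.A i (Fin.cast hwi1 j) (Fin.cast hwi k) * y' (Fin.cast hwi k)| :=
            Finset.abs_sum_le_sum_abs _ _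
        _ ≤ ∑ _k : Fin (Φ.width i), (D + η * M) := Finset.sum_le_sum fun k _ => hterm k
        _ = (Φ.width i : ℝ) * (D + η * M) := by
            rw [Finset.sum_const, Finset.card_univ, Fintype.card_fin, nsmul_eq_mul]
        _ ≤ (W:ℝ) * (D + η * M) := by
            apply mul_le_mul_of_nonneg_right hcard
            positivity
    have hfinal : (W:ℝ) * (D + η * M) + η ≤ η * ((i:ℝ)+1) * ((W:ℝ)+1)^(i+1) := by
      have h2 := one_le_Wpow W i
      rw [hD, hM, pow_succ]
      nlinarith [pow_nonneg (by linarith : (0:ℝ) ≤ (W:ℝ)+1) i,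
        mul_nonneg hη (Nat.cast_nonneg i)]
    have hrw : (η * (((i:ℕ)+1:ℕ):ℝ)) = η * ((i:ℝ)+1) := by push_cast; ring
    calc |((∑ k, Φ.A i j k * y k) + Φ.b i j)
        - ((∑ k : Fin (Φ.width i), Ψ.A i (Fin.cast hwi1 j) (Fin.cast hwi k) * y' (Fin.cast hwi k))
          + Ψ.b i (Fin.cast hwi1 j))|
        ≤ |∑ k : Fin (Φ.width i), Φ.A i j k * y k
            - ∑ k : Fin (Φ.width i), Ψ.A i (Fin.cast hwi1 j) (Fin.cast hwi k) * y' (Fin.cast hwi k)|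
          + |Φ.b i j - Ψ.b i (Fin.cast hwi1 j)| := by
          rw [show ((∑ k, Φ.A i j k * y k) + Φ.b i j)
            - ((∑ k : Fin (Φ.width i), Ψ.A i (Fin.cast hwi1 j) (Fin.cast hwi k) * y' (Fin.cast hwi k))
              + Ψ.b i (Fin.cast hwi1 j))
            = (∑ k : Fin (Φ.width i), Φ.A i j k * y k
              - ∑ k : Fin (Φ.width i), Ψ.A i (Fin.cast hwi1 j) (Fin.cast hwi k) * y' (Fin.cast hwi k))
              + (Φ.b i j - Ψ.b i (Fin.cast hwi1 j)) by ring]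
          exact abs_add_le _ _
      _ ≤ (W:ℝ) * (D + η * M) + η := add_le_add hsum hbd
      _ ≤ η * ((i:ℕ)+1:ℕ) * ((W:ℝ)+1)^(i+1) := by
          push_cast
          exact hfinal

lemma forward_depth_congr {d : ℕ} (Ψ : ReLUNet d) {i i' : ℕ} (h : i = i')
    (x : Fin (Ψ.width 0) → ℝ) (j : Fin (Ψ.width i)) :
    Ψ.forward i x j = Ψ.forward i' x (Fin.cast (by rw [h]) j) := by
  subst h; rfl

lemma realization_diff (Φ Ψ : ReLUNet 1) (hd : Φ.depth = Ψ.depth)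
    (hw : ∀ i, i ≤ Φ.depth → Φ.width i = Ψ.width i)
    (W : ℕ) (hW : Φ.widthLe W) (hW' : Ψ.widthLe W) (h1 : Φ.magLe 1) (h1' : Ψ.magLe 1)
    (η : ℝ) (hη : 0 ≤ η)
    (hA : ∀ i, (hi : i < Φ.depth) → ∀ (j : Fin (Φ.width (i+1))) (k : Fin (Φ.width i)),
      |Φ.A i j k - Ψ.A i (Fin.cast (hw (i+1) hi) j) (Fin.cast (hw i (le_of_lt hi)) k)| ≤ η)
    (hb : ∀ i, (hi : i < Φ.depth) → ∀ j : Fin (Φ.width (i+1)),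
      |Φ.b i j - Ψ.b i (Fin.cast (hw (i+1) hi) j)| ≤ η)
    (L : ℕ) (hL : Φ.depth ≤ L) (t : ℝ) (ht0 : 0 ≤ t) (ht1 : t ≤ 1) :
    |toOneVar Φ.realization t - toOneVar Ψ.realization t| ≤ η * L * ((W:ℝ)+1)^L := by
  have ht : |t| ≤ 1 := by rw [abs_of_nonneg ht0]; exact ht1
  have key := forward_diff Φ Ψ hd hw W hW hW' h1 h1' η hη hA hb
    (fun _ => t) (fun _ => t) (fun _ => ht) (fun _ => ht) (fun _ => rfl)
    Φ.depth (le_refl _) (Fin.cast Φ.width_out.symm 0)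
  have hrw : Ψ.forward Φ.depth (fun _ => t)
      (Fin.cast (hw Φ.depth (le_refl _)) (Fin.cast Φ.width_out.symm 0))
      = Ψ.forward Ψ.depth (fun _ => t) (Fin.cast Ψ.width_out.symm 0) := by
    rw [forward_depth_congr Ψ hd]
    exact congrArg _ (Fin.ext rfl)
  have heq : toOneVar Φ.realization t - toOneVar Ψ.realization t
      = Φ.forward Φ.depth (fun _ => t) (Fin.cast Φ.width_out.symm 0)
        - Ψ.forward Φ.depth (fun _ => t)
            (Fin.cast (hw Φ.depth (le_refl _)) (Fin.cast Φ.width_out.symm 0)) := by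
    unfold toOneVar ReLUNet.realization
    rw [hrw]
  rw [heq]
  refine key.trans ?_
  have hWp : (0:ℝ) ≤ (W:ℝ) := Nat.cast_nonneg W
  have h1p : (1:ℝ) ≤ (W:ℝ)+1 := by linarith
  have hdL : (Φ.depth : ℝ) ≤ (L:ℝ) := by exact_mod_cast hL
  have hpw : ((W:ℝ)+1)^Φ.depth ≤ ((W:ℝ)+1)^L := pow_le_pow_right₀ h1p hL
  have h0d : (0:ℝ) ≤ (Φ.depth:ℝ) := Nat.cast_nonneg _
  have h0p : (0:ℝ) ≤ ((W:ℝ)+1)^Φ.depth := by positivity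
  calc η * Φ.depth * ((W:ℝ)+1)^Φ.depth ≤ η * L * ((W:ℝ)+1)^Φ.depth := by
        apply mul_le_mul_of_nonneg_right ?_ h0p
        exact mul_le_mul_of_nonneg_left hdL hη
    _ ≤ η * L * ((W:ℝ)+1)^L := by
        apply mul_le_mul_of_nonneg_left hpw
        positivity

def CodeT (W L K : ℕ) : Type :=
  Fin (L+1) × (Fin (L+1) → Fin (W+1)) × ((Fin L × Fin W × Fin W) → Fin (2*K+1))
    × ((Fin L × Fin W) → Fin (2*K+1))

instance (W L K : ℕ) : Fintype (CodeT W L K) := by unfold CodeT; infer_instance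

lemma codeT_card (W L K : ℕ) : Fintype.card (CodeT W L K)
    = (L+1) * ((W+1)^(L+1) * ((2*K+1)^(L*(W*W)) * (2*K+1)^(L*W))) := by
  simp [CodeT, Fintype.card_fun]

def qR (K : ℕ) (w : ℝ) : Fin (2*K+1) :=
  ⟨(round (w * K) + K).toNat % (2*K+1), Nat.mod_lt _ (by omega)⟩

lemma qR_close (K : ℕ) (hK : 0 < K) {w w' : ℝ} (hw : |w| ≤ 1) (hw' : |w'| ≤ 1)
    (h : qR K w = qR K w') : |w - w'| ≤ 1/K := by
  have hKr : (0:ℝ) < K := by exact_mod_cast hK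
  have hb : ∀ v : ℝ, |v| ≤ 1 → -K ≤ round (v * K) ∧ round (v * K) ≤ K := by
    intro v hv
    have h1 : -(K:ℝ) ≤ v * K := by nlinarith [neg_abs_le v, le_abs_self v]
    have h2 : v * K ≤ (K:ℝ) := by nlinarith [neg_abs_le v, le_abs_self v]
    have hub := abs_sub_round (v * K)
    have e1 : v * K - round (v*K) ≤ |v * K - round (v*K)| := le_abs_self _
    have e2 : -(|v * K - round (v*K)|) ≤ v * K - round (v*K) := neg_abs_le _
    constructor
    · have : (((-K : ℤ)):ℝ) < (round (v*K) : ℝ) + 1 := by push_cast; linarith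
      have := (Int.cast_lt.mp) (by push_cast at this ⊢; linarith :
        ((-K : ℤ):ℝ) < ((round (v*K) + 1 : ℤ):ℝ))
      omega
    · have : ((round (v*K) : ℤ):ℝ) < ((K + 1 : ℤ):ℝ) := by push_cast; linarith
      have := Int.cast_lt.mp this
      omega
  obtain ⟨hl, hr⟩ := hb w hw
  obtain ⟨hl', hr'⟩ := hb w' hw'
  have hval : ((round (w * K) + K).toNat % (2*K+1) : ℕ)
      = ((round (w' * K) + K).toNat % (2*K+1) : ℕ) := congrArg Fin.val h
  have ht1 : (round (w * K) + K).toNat < 2*K+1 := by omega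
  have ht2 : (round (w' * K) + K).toNat < 2*K+1 := by omega
  rw [Nat.mod_eq_of_lt ht1, Nat.mod_eq_of_lt ht2] at hval
  have hre : round (w * K) = round (w' * K) := by omega
  have hd1 : |w * K - round (w * K)| ≤ 1/2 := abs_sub_round (w * K)
  have hd2 : |w' * K - round (w' * K)| ≤ 1/2 := abs_sub_round (w' * K)
  rw [hre] at hd1
  have : |w * K - w' * K| ≤ 1 := by
    have := abs_sub (w * K - (round (w' * K) : ℝ)) (w' * K - (round (w' * K) : ℝ))
    have he : w * K - (round (w' * K):ℝ) - (w' * K - (round (w' * K):ℝ)) = w * K - w' * K := by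
      ring
    rw [he] at this
    linarith
  rw [show w * K - w' * K = (w - w') * K by ring, abs_mul, abs_of_pos hKr] at this
  rw [div_eq_inv_mul, le_inv_mul_iff₀ hKr, mul_comm]
  linarith [this]

def encodeNet (W L K : ℕ) (Φ : ReLUNet 1) : CodeT W L K :=
  (⟨min Φ.depth L, by omega⟩,
   fun i => ⟨min (Φ.width (min i.val Φ.depth)) W, by omega⟩,
   fun p => if h : p.1.val < Φ.depth ∧ p.2.1.val < Φ.width (p.1.val+1)
        ∧ p.2.2.val < Φ.width p.1.val
      then qR K (Φ.A p.1.val ⟨p.2.1.val, h.2.1⟩ ⟨p.2.2.val, h.2.2⟩) else ⟨0, by omega⟩,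
   fun p => if h : p.1.val < Φ.depth ∧ p.2.val < Φ.width (p.1.val+1)
      then qR K (Φ.b p.1.val ⟨p.2.val, h.2⟩) else ⟨0, by omega⟩)

lemma encode_close (W L K : ℕ) (hK : 0 < K) (Φ Ψ : ReLUNet 1)
    (hdΦ : Φ.depth ≤ L) (hdΨ : Ψ.depth ≤ L) (hwΦ : Φ.widthLe W) (hwΨ : Ψ.widthLe W)
    (h1 : Φ.magLe 1) (h1' : Ψ.magLe 1)
    (h : encodeNet W L K Φ = encodeNet W L K Ψ)
    (t : ℝ) (ht0 : 0 ≤ t) (ht1 : t ≤ 1) :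
    |toOneVar Φ.realization t - toOneVar Ψ.realization t| ≤ (1/K) * L * ((W:ℝ)+1)^L := by
  have e1 := congrArg Prod.fst h
  have e2 := congrArg (fun c : CodeT W L K => c.2.1) h
  have e3 := congrArg (fun c : CodeT W L K => c.2.2.1) h
  have e4 := congrArg (fun c : CodeT W L K => c.2.2.2) h
  simp only [encodeNet] at e1 e2 e3 e4
  have hdd : Φ.depth = Ψ.depth := by
    have := congrArg Fin.val e1
    simp only [] at this
    omega
  have hww : ∀ i, i ≤ Φ.depth → Φ.width i = Ψ.width i := by
    intro i hi
    have hiL : i < L + 1 := by omega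
    have := congrArg Fin.val (congrFun e2 ⟨i, hiL⟩)
    simp only [] at this
    rw [Nat.min_eq_left hi, Nat.min_eq_left (by omega : i ≤ Ψ.depth)] at this
    rw [Nat.min_eq_left (hwΦ i hi), Nat.min_eq_left (hwΨ i (by omega))] at this
    exact this
  have hKr : (0:ℝ) ≤ 1/K := by positivity
  have hAc : ∀ i, (hi : i < Φ.depth) → ∀ (j : Fin (Φ.width (i+1))) (k : Fin (Φ.width i)),
      |Φ.A i j k - Ψ.A i (Fin.cast (hww (i+1) hi) j) (Fin.cast (hww i (le_of_lt hi)) k)|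
        ≤ 1/K := by
    intro i hi j k
    have hiL : i < L := lt_of_lt_of_le hi hdΦ
    have hjW : j.val < W := lt_of_lt_of_le j.isLt (hwΦ (i+1) hi)
    have hkW : k.val < W := lt_of_lt_of_le k.isLt (hwΦ i (le_of_lt hi))
    have heq := congrFun e3 (⟨i, hiL⟩, ⟨j.val, hjW⟩, ⟨k.val, hkW⟩)
    simp only [] at heq
    rw [dif_pos (show i < Φ.depth ∧ j.val < Φ.width (i+1) ∧ k.val < Φ.width i from
        ⟨hi, j.isLt, k.isLt⟩),
      dif_pos (show i < Ψ.depth ∧ j.val < Ψ.width (i+1) ∧ k.val < Ψ.width i from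
        ⟨by omega, (hww (i+1) hi) ▸ j.isLt, (hww i (le_of_lt hi)) ▸ k.isLt⟩)] at heq
    exact qR_close K hK ((h1 i hi).1 _ _) ((h1' i (by omega)).1 _ _) heq
  have hbc : ∀ i, (hi : i < Φ.depth) → ∀ j : Fin (Φ.width (i+1)),
      |Φ.b i j - Ψ.b i (Fin.cast (hww (i+1) hi) j)| ≤ 1/K := by
    intro i hi j
    have hiL : i < L := lt_of_lt_of_le hi hdΦ
    have hjW : j.val < W := lt_of_lt_of_le j.isLt (hwΦ (i+1) hi)
    have heq := congrFun e4 (⟨i, hiL⟩, ⟨j.val, hjW⟩)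
    simp only [] at heq
    rw [dif_pos (show i < Φ.depth ∧ j.val < Φ.width (i+1) from ⟨hi, j.isLt⟩),
      dif_pos (show i < Ψ.depth ∧ j.val < Ψ.width (i+1) from
        ⟨by omega, (hww (i+1) hi) ▸ j.isLt⟩)] at heq
    exact qR_close K hK ((h1 i hi).2 _) ((h1' i (by omega)).2 _) heq
  exact realization_diff Φ Ψ hdd hww W hwΦ hwΨ h1 h1' (1/K) hKr hAc hbc L hdΦ t ht0 ht1

open MeasureTheory

instance probIcc : IsProbabilityMeasure (volume.restrict (Set.Icc (0:ℝ) 1)) := by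
  constructor
  rw [Measure.restrict_apply_univ, Real.volume_Icc]
  norm_num

lemma gsaw_sep_L1 {N : ℕ} (hN : 0 < N) (σ τ : Fin N → Bool) :
    ENNReal.ofReal ((hammingDist σ τ : ℝ) * (1/(2*N)) * (1/(2*N)))
      ≤ eLpNorm (gsaw N σ - gsaw N τ) 1 (volume.restrict (Set.Icc 0 1)) := by
  classical
  have hNp : (0:ℝ) < N := by exact_mod_cast hN
  set Δ : Finset (Fin N) := Finset.univ.filter (fun i => σ i ≠ τ i) with hΔ
  have hΔcard : Δ.card = hammingDist σ τ := rfl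
  set I : Fin N → Set ℝ := fun i => Set.Icc ((i:ℝ)/N + 1/(4*N)) ((i:ℝ)/N + 3/(4*N)) with hI
  have hIvol : ∀ i, volume (I i) = ENNReal.ofReal (1/(2*N)) := by
    intro i
    rw [hI]
    simp only [Real.volume_Icc]
    congr 1
    field_simp
    ring
  have hIsub : ∀ i : Fin N, I i ⊆ Set.Icc (0:ℝ) 1 := by
    intro i x hx
    obtain ⟨hx1, hx2⟩ := hx
    have hi0 : (0:ℝ) ≤ (i:ℝ)/N := by positivity
    have hiN : ((i:ℝ)+1) ≤ N := by
      have : (i:ℕ) < N := i.isLt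
      exact_mod_cast this
    constructor
    · have : (0:ℝ) < 1/(4*N) := by positivity
      linarith
    · have h3 : (3:ℝ)/(4*N) ≤ 1/N := by
        rw [div_le_div_iff₀ (by positivity) hNp]; linarith
      have h4 : ((i:ℝ))/N + 1/N ≤ 1 := by
        rw [← add_div, div_le_one hNp]; linarith
      linarith
  have hdisj : (↑Δ : Set (Fin N)).PairwiseDisjoint I := by
    intro i _ j _ hij
    have hij' : (i:ℕ) ≠ (j:ℕ) := fun h => hij (Fin.ext h)
    rw [Function.onFun, Set.disjoint_left]
    intro x hxi hxj
    obtain ⟨h1, h2⟩ := hxi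
    obtain ⟨h3, h4⟩ := hxj
    have h14 : (1:ℝ)/(2*N) < 1/N := by rw [div_lt_div_iff₀ (by positivity) hNp]; linarith
    have h34 : (3:ℝ)/(4*N) = 1/(4*N) + 1/(2*N) := by field_simp; ring
    rcases lt_or_gt_of_ne hij' with h | h
    · have : ((i:ℝ)+1) ≤ (j:ℝ) := by exact_mod_cast h
      have hij2 : (i:ℝ)/N + 1/N ≤ (j:ℝ)/N := by
        rw [← add_div]
        gcongr
      linarith
    · have : ((j:ℝ)+1) ≤ (i:ℝ) := by exact_mod_cast h
      have hij2 : (j:ℝ)/N + 1/N ≤ (i:ℝ)/N := by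
        rw [← add_div]
        gcongr
      linarith
  set U : Set ℝ := ⋃ i ∈ Δ, I i with hU
  have hUmeas : ∀ i : Fin N, i ∈ Δ → MeasurableSet (I i) := fun i _ => measurableSet_Icc
  have hUvol : volume U = Δ.card • ENNReal.ofReal (1/(2*N)) := by
    rw [hU, measure_biUnion_finset hdisj hUmeas]
    rw [Finset.sum_congr rfl (fun i _ => hIvol i), Finset.sum_const]
  have hUsub : U ⊆ Set.Icc (0:ℝ) 1 := by
    rw [hU]
    exact Set.iUnion₂_subset fun i _ => hIsub i
  have hlow : ∀ x ∈ U, ENNReal.ofReal (1/(2*N)) ≤ ‖(gsaw N σ - gsaw N τ) x‖₊ := by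
    intro x hx
    rw [hU] at hx
    obtain ⟨i, hiΔ, hxI⟩ := Set.mem_iUnion₂.mp hx
    have hστ : σ i ≠ τ i := by
      rw [hΔ] at hiΔ
      exact (Finset.mem_filter.mp hiΔ).2
    have hsep := gsaw_sep hN i hστ hxI.1 hxI.2
    have : (1:ℝ)/(2*N) ≤ ‖(gsaw N σ - gsaw N τ) x‖ := by
      simpa [Real.norm_eq_abs] using hsep
    rw [← ENNReal.ofReal_coe_nnreal, coe_nnnorm]
    exact ENNReal.ofReal_le_ofReal this
  have hmeas : Measurable fun x => (‖(gsaw N σ - gsaw N τ) x‖₊ : ℝ≥0∞) := by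
    apply Measurable.coe_nnreal_ennreal
    apply Measurable.nnnorm
    exact ((gsaw_continuous σ).sub (gsaw_continuous τ)).measurable
  calc ENNReal.ofReal ((hammingDist σ τ : ℝ) * (1/(2*N)) * (1/(2*N)))
      = ENNReal.ofReal (1/(2*N)) * (Δ.card • ENNReal.ofReal (1/(2*N))) := by
        rw [nsmul_eq_mul, ← ENNReal.ofReal_natCast, ← ENNReal.ofReal_mul (by positivity),
          ← ENNReal.ofReal_mul (by positivity)]
        rw [hΔcard]
        congr 1
        push_cast
        ring
    _ = ENNReal.ofReal (1/(2*N)) * volume U := by rw [hUvol]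
    _ = ∫⁻ _x in U, ENNReal.ofReal (1/(2*N)) ∂volume := by rw [setLIntegral_const]
    _ ≤ ∫⁻ x in U, (‖(gsaw N σ - gsaw N τ) x‖₊ : ℝ≥0∞) ∂volume :=
        setLIntegral_mono hmeas hlow
    _ ≤ ∫⁻ x in Set.Icc (0:ℝ) 1, (‖(gsaw N σ - gsaw N τ) x‖₊ : ℝ≥0∞) ∂volume :=
        lintegral_mono' (Measure.restrict_mono hUsub le_rfl) le_rfl
    _ = eLpNorm (gsaw N σ - gsaw N τ) 1 (volume.restrict (Set.Icc 0 1)) := by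
        rw [eLpNorm_one_eq_lintegral_enorm]; rfl

lemma gsaw_mem_H1 {N : ℕ} (hN : 0 < N) (σ : Fin N → Bool) : gsaw N σ ∈ H1 :=
  ⟨(gsaw_continuous σ).continuousOn,
   fun x _ => gsaw_abs_le hN σ x,
   fun x hx y hy => gsaw_lip hN σ hx.1 hx.2 hy.1 hy.2⟩

lemma L1_le_of_bound (f : ℝ → ℝ) (C : ℝ) (h : ∀ x ∈ Set.Icc (0:ℝ) 1, |f x| ≤ C) :
    eLpNorm f 1 (volume.restrict (Set.Icc 0 1)) ≤ ENNReal.ofReal C := by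
  have hae : ∀ᵐ x ∂(volume.restrict (Set.Icc (0:ℝ) 1)), ‖f x‖ ≤ C :=
    (ae_restrict_iff' measurableSet_Icc).mpr
      (ae_of_all _ fun x hx => by simpa [Real.norm_eq_abs] using h x hx)
  have hb := eLpNorm_le_of_ae_bound (p := 1) hae
  simpa [measure_univ] using hb

lemma one_le_logb_of_two_le {W : ℕ} (hW : 2 ≤ W) : 1 ≤ Real.logb 2 (W:ℝ) := by
  have h2 : Real.logb 2 2 = 1 := Real.logb_self_eq_one (by norm_num)
  rw [← h2]
  exact Real.logb_le_logb_of_le (by norm_num) (by norm_num) (by exact_mod_cast hW)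

lemma clog_le_two_logb {W : ℕ} (hW : 2 ≤ W) :
    (Nat.clog 2 W : ℝ) ≤ 2 * Real.logb 2 (W:ℝ) := by
  have hc1 : 0 < Nat.clog 2 W := Nat.clog_pos (by norm_num) hW
  have hpow : (2:ℕ) ^ (Nat.clog 2 W - 1) < W :=
    Nat.pow_pred_clog_lt_self (by norm_num) (by omega)
  have hpr : ((2:ℝ)) ^ ((Nat.clog 2 W - 1 : ℕ)) < (W:ℝ) := by exact_mod_cast hpow
  have hlb : ((Nat.clog 2 W - 1 : ℕ) : ℝ) ≤ Real.logb 2 (W:ℝ) := by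
    have := Real.logb_le_logb_of_le (b := 2) (by norm_num)
      (by positivity : (0:ℝ) < (2:ℝ)^((Nat.clog 2 W - 1 : ℕ))) hpr.le
    rwa [Real.logb_pow, Real.logb_self_eq_one (by norm_num), mul_one] at this
  have h1 : 1 ≤ Real.logb 2 (W:ℝ) := one_le_logb_of_two_le hW
  have hc : ((Nat.clog 2 W - 1 : ℕ) : ℝ) = (Nat.clog 2 W : ℝ) - 1 := by
    rw [Nat.cast_sub hc1]; simp
  rw [hc] at hlb
  linarith

lemma two_pow_mul_bound {a b c d a' b' c' d' : ℕ} (ha : a ≤ 2^a') (hb : b ≤ 2^b')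
    (hc : c ≤ 2^c') (hd : d ≤ 2^d') :
    a * (b * (c * d)) ≤ 2^(a' + (b' + (c' + d'))) := by
  rw [pow_add, pow_add, pow_add]
  exact Nat.mul_le_mul ha (Nat.mul_le_mul hb (Nat.mul_le_mul hc hd))

lemma card_code_lt (W L : ℕ) (hW : 2 ≤ W) (hL : 1 ≤ L) :
    Fintype.card (CodeT W L (256 * (2^40 * (W^2 * L^2 * Nat.clog 2 W)) * L * (W+1)^L))
      < 2 ^ ((2^40 * (W^2 * L^2 * Nat.clog 2 W)) / 8) := by
  set c1 := Nat.clog 2 W with hc1def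
  have hc1 : 1 ≤ c1 := Nat.clog_pos (by norm_num) hW
  set N := 2^40 * (W^2 * L^2 * c1) with hNdef
  set K := 256 * N * L * (W+1)^L with hKdef
  set e0 := 50 + 3*c1 + 3*L + (c1+1)*L with he0def
  have hWc : W ≤ 2^c1 := Nat.le_pow_clog (by norm_num) W
  have hLp : L ≤ 2^L := (Nat.lt_two_pow_self (n := L)).le
  have hc1p : c1 ≤ 2^c1 := (Nat.lt_two_pow_self (n := c1)).le
  have hW1 : W + 1 ≤ 2^(c1+1) := by
    have : (2:ℕ)^(c1+1) = 2^c1 + 2^c1 := by rw [pow_succ]; ring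
    have h1 : 1 ≤ 2^c1 := Nat.one_le_two_pow
    omega
  have hNb : N ≤ 2^(40 + 3*c1 + 2*L) := by
    calc N = 2^40 * (W^2 * (L^2 * c1)) := by rw [hNdef]; ring
      _ ≤ 2^40 * ((2^c1)^2 * ((2^L)^2 * 2^c1)) := by
          apply Nat.mul_le_mul_left
          exact Nat.mul_le_mul (Nat.pow_le_pow_left hWc 2)
            (Nat.mul_le_mul (Nat.pow_le_pow_left hLp 2) hc1p)
      _ = 2^(40 + 3*c1 + 2*L) := by
          simp only [← pow_mul, ← pow_add]
          try congr 1
          try ring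
  have hKb : K ≤ 2^(48 + 3*c1 + 3*L + (c1+1)*L) := by
    calc K = 256 * (N * (L * (W+1)^L)) := by rw [hKdef]; ring
      _ ≤ 2^8 * (2^(40 + 3*c1 + 2*L) * (2^L * (2^(c1+1))^L)) := by
          apply Nat.mul_le_mul (by norm_num)
          exact Nat.mul_le_mul hNb (Nat.mul_le_mul hLp (Nat.pow_le_pow_left hW1 L))
      _ = 2^(48 + 3*c1 + 3*L + (c1+1)*L) := by
          simp only [← pow_mul, ← pow_add]
          try congr 1
          try ring
  have hKpos : 1 ≤ K := by
    rw [hKdef]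
    have h1 : 1 ≤ N := by
      have : 0 < N := by
        rw [hNdef]
        have hw0 : 0 < W := by omega
        have hc0 : 0 < c1 := by omega
        have hl0 : 0 < L := by omega
        exact Nat.mul_pos (by norm_num) (Nat.mul_pos (Nat.mul_pos (Nat.pow_pos hw0)
          (Nat.pow_pos hl0)) hc0)
      omega
    have h2 : 1 ≤ (W+1)^L := Nat.one_le_pow _ _ (by omega)
    calc 1 = 1 * 1 * 1 * 1 := by norm_num
      _ ≤ 256 * N * L * (W+1)^L :=
          Nat.mul_le_mul (Nat.mul_le_mul (Nat.mul_le_mul (by norm_num) h1) hL) h2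
  have h2K : 2*K + 1 ≤ 2^e0 := by
    have : 2*K+1 ≤ 4*K := by omega
    refine le_trans this ?_
    calc 4*K ≤ 4 * 2^(48 + 3*c1 + 3*L + (c1+1)*L) := Nat.mul_le_mul_left _ hKb
      _ = 2^(50 + 3*c1 + 3*L + (c1+1)*L) := by
          rw [show (4:ℕ) = 2^2 by norm_num, ← pow_add]
          try congr 1
          try ring
      _ = 2^e0 := by rw [he0def]

  set E := L + ((c1+1)*(L+1) + (e0*(L*(W*W)) + e0*(L*W))) with hEdef
  have hcard : Fintype.card (CodeT W L K) ≤ 2^E := by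
    rw [codeT_card]
    rw [hEdef]
    apply two_pow_mul_bound
    · have := Nat.lt_two_pow_self (n := L)
      omega
    · calc (W+1)^(L+1) ≤ (2^(c1+1))^(L+1) := Nat.pow_le_pow_left hW1 _
        _ = 2^((c1+1)*(L+1)) := by rw [← pow_mul]
    · calc (2*K+1)^(L*(W*W)) ≤ (2^e0)^(L*(W*W)) := Nat.pow_le_pow_left h2K _
        _ = 2^(e0*(L*(W*W))) := by rw [← pow_mul]
    · calc (2*K+1)^(L*W) ≤ (2^e0)^(L*W) := Nat.pow_le_pow_left h2K _
        _ = 2^(e0*(L*W)) := by rw [← pow_mul]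
  have hN8 : N / 8 = 2^37 * (W^2*L^2*c1) := by
    have h8 : N = 8 * (2^37 * (W^2*L^2*c1)) := by rw [hNdef]; ring
    omega
  have hX0 : 0 < W^2*L^2*c1 :=
    Nat.mul_pos (Nat.mul_pos (Nat.pow_pos (by omega)) (Nat.pow_pos (by omega)))
      (by omega)
  have hX1 : 1 ≤ W^2*L^2*c1 := hX0
  have hEle : E ≤ 121 * (W^2*L^2*c1) := by
    have he0le : e0 ≤ 58 * (c1*L) := by
      have h1 : (c1+1)*L ≤ 2*(c1*L) := by
        have : c1 + 1 ≤ 2*c1 := by omega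
        calc (c1+1)*L ≤ (2*c1)*L := Nat.mul_le_mul_right _ this
          _ = 2*(c1*L) := by ring
      have h50 : 50 ≤ 50*(c1*L) := by
        have h11 : 1*1 ≤ c1*L := Nat.mul_le_mul hc1 hL
        omega
      have h3c : 3*c1 ≤ 3*(c1*L) := by
        have : c1 ≤ c1*L := Nat.le_mul_of_pos_right c1 (by omega)
        omega
      have h3L : 3*L ≤ 3*(c1*L) := by
        have : L ≤ c1*L := Nat.le_mul_of_pos_left L (by omega)
        omega
      omega
    have h2 : e0*(L*(W*W)) ≤ 58 * (W^2*L^2*c1) := by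
      calc e0*(L*(W*W)) ≤ (58*(c1*L))*(L*(W*W)) := Nat.mul_le_mul_right _ he0le
        _ = 58 * (W^2*L^2*c1) := by ring
    have h3 : e0*(L*W) ≤ 58 * (W^2*L^2*c1) := by
      calc e0*(L*W) ≤ (58*(c1*L))*(L*W) := Nat.mul_le_mul_right _ he0le
        _ = (58*(c1*(L*L)))*W := by ring
        _ ≤ (58*(c1*(L*L)))*(W*W) := Nat.mul_le_mul_left _ (Nat.le_mul_of_pos_left W (by omega))
        _ = 58 * (W^2*L^2*c1) := by ring
    have h1 : L + (c1+1)*(L+1) ≤ 5 * (W^2*L^2*c1) := by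
      have ha : (c1+1)*(L+1) ≤ (2*c1)*(2*L) := Nat.mul_le_mul (by omega) (by omega)
      have hb : (2*c1)*(2*L) = 4*(c1*L) := by ring
      have hcl : L ≤ c1*L := Nat.le_mul_of_pos_left L (by omega)
      have hcx : c1*L ≤ W^2*L^2*c1 := by
        have hwl : 1 ≤ W^2*L := Nat.mul_pos (Nat.pow_pos (by omega)) (by omega)
        calc c1*L = (c1*L)*1 := by ring
          _ ≤ (c1*L)*(W^2*L) := Nat.mul_le_mul_left _ hwl
          _ = W^2*L^2*c1 := by ring
      omega
    omega
  have hElt : E < N/8 := by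
    rw [hN8]
    have : 121 * (W^2*L^2*c1) < 2^37 * (W^2*L^2*c1) :=
      (Nat.mul_lt_mul_right hX0).mpr (by norm_num)
    omega
  calc Fintype.card (CodeT W L K) ≤ 2^E := hcard
    _ < 2^(N/8) := Nat.pow_lt_pow_right (by norm_num) hElt

lemma packing_exists (N : ℕ) (h8 : 8 ∣ N) (hN : 32 ≤ N) :
    ∃ S : Finset (Fin N → Bool),
      (∀ σ ∈ S, ∀ τ ∈ S, σ ≠ τ → N/8 ≤ hammingDist σ τ) ∧ 2^(N/8) ≤ S.card := by
  have hD : 0 < N/8 := by omega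
  obtain ⟨S, hsep, hcard⟩ := gv_code N (N/8) hD
  refine ⟨S, hsep, ?_⟩
  set D := N/8 with hDdef
  set m := D - 1 with hmdef
  have hDm : D = m + 1 := by omega
  have hm1 : 1 ≤ m := by omega
  have hm2 : m ≤ N/2 := by omega
  have h16 : N ≤ 16*m := by omega
  have hsum : ∑ k ∈ Finset.range D, N.choose k ≤ 2^(7*D) := by
    calc ∑ k ∈ Finset.range D, N.choose k = ∑ k ∈ Finset.range (m+1), N.choose k := by
          rw [hDm]
      _ ≤ (m+1) * N.choose m := sum_choose_le hm2
      _ ≤ 2^m * N.choose m := Nat.mul_le_mul_right _ (Nat.lt_two_pow_self (n := m))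
      _ ≤ 2^m * 48^m := Nat.mul_le_mul_left _ (choose_le_48_pow hm1 h16)
      _ ≤ 2^m * (2^6)^m := Nat.mul_le_mul_left _ (Nat.pow_le_pow_left (by norm_num) m)
      _ = 2^(7*m) := by rw [← pow_mul, ← pow_add]; congr 1; ring
      _ ≤ 2^(7*D) := Nat.pow_le_pow_right (by norm_num) (by omega)
  have hN8D : N = D + 7*D := by omega
  have hkey : 2^D * 2^(7*D) ≤ S.card * 2^(7*D) := by
    calc 2^D * 2^(7*D) = 2^N := by rw [← pow_add, ← hN8D]
      _ ≤ S.card * ∑ k ∈ Finset.range D, N.choose k := hcard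
      _ ≤ S.card * 2^(7*D) := Nat.mul_le_mul_left _ hsum
  exact Nat.le_of_mul_le_mul_right hkey (Nat.pow_pos (by norm_num))

/-- Lower bound on the minimax error in approximating 1-Lipschitz
functions by deep ReLU networks with weights bounded by 1:
`A(H¹([0,1]), R(1,W,L,1), ‖·‖_{L^p([0,1])}) ≥ min{1/8, c (W²L² log W)⁻¹}`. -/
theorem lipschitz_approximation_lower_bound :
    ∃ c : ℝ, 0 < c ∧
      ∀ (W L : ℕ) (p : ℝ≥0∞),
        2 ≤ W → 0 < L → 1 ≤ p →
        ENNReal.ofReal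
            (min (1 / 8) (c * ((W : ℝ) ^ 2 * (L : ℝ) ^ 2 * Real.logb 2 (W : ℝ))⁻¹))
          ≤ minimaxErr H1 (RclassB₁ W L 1) (intervalDist p) := by
  
  refine ⟨1/2^49, by positivity, ?_⟩
  intro W L p hW hL hp
  have hL1 : 1 ≤ L := hL
  set c1 := Nat.clog 2 W with hc1def
  have hc1 : 1 ≤ c1 := Nat.clog_pos (by norm_num) hW
  set N := 2^40 * (W^2 * L^2 * c1) with hNdef
  set K := 256 * N * L * (W+1)^L with hKdef
  have hNpos : 0 < N := by
    rw [hNdef]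
    exact Nat.mul_pos (by norm_num) (Nat.mul_pos (Nat.mul_pos
      (Nat.pow_pos (by omega)) (Nat.pow_pos (by omega))) (by omega))
  have h8 : 8 ∣ N := ⟨2^37 * (W^2*L^2*c1), by rw [hNdef]; ring⟩
  have hN32 : 32 ≤ N := by
    have : 1 ≤ W^2*L^2*c1 := Nat.mul_pos (Nat.mul_pos
      (Nat.pow_pos (by omega)) (Nat.pow_pos (by omega))) (by omega)
    calc 32 ≤ 2^40 * 1 := by norm_num
      _ ≤ 2^40 * (W^2*L^2*c1) := Nat.mul_le_mul_left _ this
  have hKpos : 0 < K := by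
    rw [hKdef]
    exact Nat.mul_pos (Nat.mul_pos (Nat.mul_pos (by norm_num) hNpos) (by omega))
      (Nat.pow_pos (by omega))
  have hNr : (0:ℝ) < (N:ℝ) := by exact_mod_cast hNpos
  set ε : ℝ := 1/(256*(N:ℝ)) with hεdef
  have hεpos : 0 < ε := by rw [hεdef]; positivity
  set μ := volume.restrict (Set.Icc (0:ℝ) 1) with hμdef
  have hmain : ENNReal.ofReal ε ≤ minimaxErr H1 (RclassB₁ W L 1) (intervalDist p) := by
    by_contra hcon
    push_neg at hcon
    obtain ⟨S, hsep, hScard⟩ := packing_exists N h8 hN32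
    have hch : ∀ σ : Fin N → Bool, σ ∈ S → ∃ Φ : ReLUNet 1, Φ.widthLe W ∧ Φ.depth ≤ L
        ∧ Φ.magLe 1 ∧ eLpNorm (toOneVar Φ.realization - gsaw N σ) p μ < ENNReal.ofReal ε := by
      intro σ _
      have hg : gsaw N σ ∈ H1 := gsaw_mem_H1 hNpos σ
      have hinf : (⨅ f ∈ RclassB₁ W L 1, intervalDist p f (gsaw N σ)) < ENNReal.ofReal ε :=
        lt_of_le_of_lt
          (le_biSup (fun g => ⨅ f ∈ RclassB₁ W L 1, intervalDist p f g) hg) hcon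
      obtain ⟨f, hf⟩ := iInf_lt_iff.mp hinf
      obtain ⟨hfF, hflt⟩ := iInf_lt_iff.mp hf
      obtain ⟨g', hg', hfg⟩ := hfF
      obtain ⟨Φ, hΦW, hΦL, hΦB, hΦr⟩ := hg'
      refine ⟨Φ, hΦW, hΦL, hΦB, ?_⟩
      have : toOneVar Φ.realization = f := by rw [hΦr]; exact hfg
      rw [this]
      exact hflt
    choose Φf hΦW hΦL hΦB hΦclose using hch
    have hcardlt : (Finset.univ : Finset (CodeT W L K)).card < S.attach.card := by
      rw [Finset.card_univ, Finset.card_attach]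
      exact lt_of_lt_of_le (card_code_lt W L hW hL1) hScard
    obtain ⟨σa, hσa, τa, hτa, hne, heq⟩ :=
      Finset.exists_ne_map_eq_of_card_lt_of_maps_to (t := (Finset.univ : Finset (CodeT W L K)))
        (f := fun s : {x // x ∈ S} => encodeNet W L K (Φf s.1 s.2)) hcardlt
        (fun a _ => Finset.mem_univ _)
    have hστ : σa.1 ≠ τa.1 := fun h => hne (Subtype.ext h)
    set σ := σa.1 with hσdef
    set τ := τa.1 with hτdef
    set fσ := toOneVar (Φf σ σa.2).realization with hfσdef
    set fτ := toOneVar (Φf τ τa.2).realization with hfτdef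
    have hfσm : AEStronglyMeasurable fσ μ := (realization_continuous _).aestronglyMeasurable
    have hfτm : AEStronglyMeasurable fτ μ := (realization_continuous _).aestronglyMeasurable
    have hgσm : AEStronglyMeasurable (gsaw N σ) μ := (gsaw_continuous σ).aestronglyMeasurable
    have hgτm : AEStronglyMeasurable (gsaw N τ) μ := (gsaw_continuous τ).aestronglyMeasurable
    have h1σ : eLpNorm (fσ - gsaw N σ) 1 μ < ENNReal.ofReal ε :=
      lt_of_le_of_lt (eLpNorm_le_eLpNorm_of_exponent_le hp (hfσm.sub hgσm))
        (hΦclose σ σa.2)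
    have h1τ : eLpNorm (fτ - gsaw N τ) 1 μ < ENNReal.ofReal ε :=
      lt_of_le_of_lt (eLpNorm_le_eLpNorm_of_exponent_le hp (hfτm.sub hgτm))
        (hΦclose τ τa.2)
    have hKr : (K:ℝ) = 256*(N:ℝ)*L*((W:ℝ)+1)^L := by rw [hKdef]; push_cast; ring
    have hmid : eLpNorm (fσ - fτ) 1 μ ≤ ENNReal.ofReal ε := by
      apply L1_le_of_bound
      intro t ht
      have hc := encode_close W L K hKpos (Φf σ σa.2) (Φf τ τa.2)
        (hΦL σ σa.2) (hΦL τ τa.2) (hΦW σ σa.2) (hΦW τ τa.2)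
        (hΦB σ σa.2) (hΦB τ τa.2) heq t ht.1 ht.2
      have hKne : (K:ℝ) ≠ 0 := by
        have : (0:ℝ) < K := by exact_mod_cast hKpos
        linarith
      have hWL : (0:ℝ) < ((W:ℝ)+1)^L := by positivity
      have hLr : (0:ℝ) < (L:ℝ) := by exact_mod_cast hL
      have heq2 : (1/(K:ℝ)) * L * ((W:ℝ)+1)^L = ε := by
        rw [hKr, hεdef]
        field_simp
      rw [heq2] at hc
      simpa only [Pi.sub_apply] using hc
    have hsepN : N/8 ≤ hammingDist σ τ := hsep σ σa.2 τ τa.2 hστ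
    have hsepL1 := gsaw_sep_L1 hNpos σ τ
    have htri : eLpNorm (gsaw N σ - gsaw N τ) 1 μ
        ≤ eLpNorm (gsaw N σ - fσ) 1 μ + (eLpNorm (fσ - fτ) 1 μ + eLpNorm (fτ - gsaw N τ) 1 μ) := by
      have hdecomp : gsaw N σ - gsaw N τ = (gsaw N σ - fσ) + ((fσ - fτ) + (fτ - gsaw N τ)) := by
        funext t
        simp only [Pi.sub_apply, Pi.add_apply]
        ring
      rw [hdecomp]
      refine le_trans (eLpNorm_add_le (hgσm.sub hfσm) ((hfσm.sub hfτm).add (hfτm.sub hgτm))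
        le_rfl) ?_
      exact add_le_add le_rfl (eLpNorm_add_le (hfσm.sub hfτm) (hfτm.sub hgτm) le_rfl)
    have hup : eLpNorm (gsaw N σ - gsaw N τ) 1 μ < ENNReal.ofReal (3*ε) := by
      have h3 : ENNReal.ofReal (3*ε) = ENNReal.ofReal ε + (ENNReal.ofReal ε + ENNReal.ofReal ε) := by
        rw [← ENNReal.ofReal_add hεpos.le hεpos.le,
          ← ENNReal.ofReal_add hεpos.le (by linarith : (0:ℝ) ≤ ε + ε)]
        congr 1
        ring
      rw [h3]
      apply lt_of_le_of_lt htri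
      apply ENNReal.add_lt_add_of_lt_of_le
      · exact ne_top_of_le_ne_top
          (ENNReal.add_ne_top.mpr ⟨ENNReal.ofReal_ne_top, ENNReal.ofReal_ne_top⟩)
          (add_le_add hmid h1τ.le)
      · rw [eLpNorm_sub_comm]
        exact h1σ
      · exact add_le_add hmid h1τ.le
    have hlowval : 8*ε ≤ (hammingDist σ τ : ℝ) * (1/(2*(N:ℝ))) * (1/(2*(N:ℝ))) := by
      have hc8 : ((N/8 : ℕ):ℝ) = (N:ℝ)/8 := by
        rw [Nat.cast_div h8 (by norm_num)]
        norm_num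
      have hd : (N:ℝ)/8 ≤ (hammingDist σ τ : ℝ) := by
        rw [← hc8]
        exact_mod_cast hsepN
      have he : ((N:ℝ)/8) * (1/(2*(N:ℝ))) * (1/(2*(N:ℝ))) = 8*ε := by
        rw [hεdef]
        field_simp
        ring
      rw [← he]
      have hpos : (0:ℝ) ≤ (1/(2*(N:ℝ))) := by positivity
      apply mul_le_mul_of_nonneg_right (mul_le_mul_of_nonneg_right hd hpos) hpos
    have hcontra : ENNReal.ofReal (8*ε) < ENNReal.ofReal (3*ε) := by
      calc ENNReal.ofReal (8*ε)
          ≤ ENNReal.ofReal ((hammingDist σ τ : ℝ) * (1/(2*(N:ℝ))) * (1/(2*(N:ℝ)))) :=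
            ENNReal.ofReal_le_ofReal hlowval
        _ ≤ eLpNorm (gsaw N σ - gsaw N τ) 1 μ := hsepL1
        _ < ENNReal.ofReal (3*ε) := hup
    rw [ENNReal.ofReal_lt_ofReal_iff (by linarith)] at hcontra
    linarith
  refine le_trans ?_ hmain
  apply ENNReal.ofReal_le_ofReal
  have hlogb1 : 1 ≤ Real.logb 2 (W:ℝ) := one_le_logb_of_two_le hW
  have hclogb : (c1:ℝ) ≤ 2 * Real.logb 2 (W:ℝ) := clog_le_two_logb hW
  have hWr : (0:ℝ) < (W:ℝ) := by exact_mod_cast (by omega : 0 < W)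
  have hLr : (0:ℝ) < (L:ℝ) := by exact_mod_cast hL
  have hc1r : (0:ℝ) < (c1:ℝ) := by exact_mod_cast hc1
  set X := (W:ℝ)^2 * (L:ℝ)^2 * Real.logb 2 (W:ℝ) with hXdef
  have hX : 0 < X := by
    rw [hXdef]
    have := lt_of_lt_of_le one_pos hlogb1
    positivity
  refine min_le_of_right_le ?_
  have h256N : 256*(N:ℝ) = 2^48 * ((W:ℝ)^2*(L:ℝ)^2*(c1:ℝ)) := by
    rw [hNdef]
    push_cast
    ring
  have hkey : 256*(N:ℝ) ≤ 2^49 * X := by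
    rw [h256N, hXdef]
    nlinarith [mul_le_mul_of_nonneg_left hclogb
      (show (0:ℝ) ≤ (W:ℝ)^2*(L:ℝ)^2 by positivity)]
  rw [hεdef, one_div (2^49 : ℝ), ← mul_inv, one_div]
  exact inv_anti₀ (by positivity) hkey
end
end

section
/- Let U, V ∈ ℕ. For each j = 1,…,U, let (Z_{j,i})_{i=1}^V be i.i.d. nonnegative random variables with mean μ_j and taking values in [0,1] almost surely (no independence is assumed across different j). Then E( sup_{j=1,…,U} ( μ_j − (2/V) Σ_{i=1}^V Z_{j,i} ) ) ≤ 8 log(U)/V. -/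
open MeasureTheory ProbabilityTheory

/-- For rows of i.i.d. `[0,1]`-valued random variables `(Z_{j,i})_{i=1}^V`
with means `μ_j`, the expected supremum of the recentered averages satisfies
`E(sup_j (μ_j − (2/V)Σ_i Z_{j,i})) ≤ 8 log(U)/V`. -/
theorem expected_sup_recentered_averages
    (U V : ℕ) (hU : 0 < U) (hV : 0 < V)
    (Ω : Type*) [MeasureSpace Ω] [IsProbabilityMeasure (ℙ : Measure Ω)]
    (Z : Fin U → Fin V → Ω → ℝ) (μ : Fin U → ℝ)
    (hmeas : ∀ j i, Measurable (Z j i))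
    (hindep : ∀ j, iIndepFun (Z j) ℙ)
    (hident : ∀ j i i', Measure.map (Z j i) ℙ = Measure.map (Z j i') ℙ)
    (hbound : ∀ j i, ∀ᵐ ω ∂ℙ, Z j i ω ∈ Set.Icc (0 : ℝ) 1)
    (hmean : ∀ j i, ∫ ω, Z j i ω ∂ℙ = μ j) :
    ∫ ω, (⨆ j, (μ j - (2 / (V : ℝ)) * ∑ i, Z j i ω)) ∂ℙ
      ≤ 8 * Real.logb 2 (U : ℝ) / (V : ℝ) := by
  classical
  haveI : Nonempty (Fin U) := ⟨⟨0, hU⟩⟩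
  have i0 : Fin V := ⟨0, hV⟩
  have hVR : (0:ℝ) < V := by exact_mod_cast hV
  have hUR : (1:ℝ) ≤ U := by exact_mod_cast hU
  set X : Fin U → Ω → ℝ := fun j ω => μ j - (2 / (V : ℝ)) * ∑ i, Z j i ω with hX
  -- integrability of each Z j i
  have hZint : ∀ j i, Integrable (Z j i) ℙ := by
    intro j i
    refine (integrable_const (1:ℝ)).mono' (hmeas j i).aestronglyMeasurable ?_
    filter_upwards [hbound j i] with ω hω
    rw [Real.norm_eq_abs, abs_le]; exact ⟨by linarith [hω.1], hω.2⟩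
  have hμ0 : ∀ j, 0 ≤ μ j := by
    intro j
    rw [← hmean j i0]
    exact integral_nonneg_of_ae ((hbound j i0).mono fun ω h => h.1)
  have hμ1 : ∀ j, μ j ≤ 1 := by
    intro j
    rw [← hmean j i0]
    calc ∫ ω, Z j i0 ω ∂ℙ ≤ ∫ _ω, (1:ℝ) ∂ℙ :=
          integral_mono_ae (hZint j i0) (integrable_const 1)
            ((hbound j i0).mono fun ω h => h.2)
      _ = 1 := by simp
  -- exp(-1) ≤ 1/2
  have hexp_half : Real.exp (-1) ≤ 1/2 := by
    rw [Real.exp_neg]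
    have h1 : (2:ℝ) ≤ Real.exp 1 := by
      have := Real.add_one_le_exp (1:ℝ); linarith
    rw [inv_le_comm₀ (Real.exp_pos 1) (by norm_num)]
    linarith
  -- mgf bound for each Z j i at t = -1
  have hmgf : ∀ j i, mgf (Z j i) ℙ (-1) ≤ Real.exp (-(μ j)/2) := by
    intro j i
    have hptwise : ∀ᵐ ω ∂ℙ, Real.exp ((-1) * Z j i ω)
        ≤ 1 - (1 - Real.exp (-1)) * Z j i ω := by
      filter_upwards [hbound j i] with ω hω
      have h := convexOn_exp.2 (Set.mem_univ (-1:ℝ)) (Set.mem_univ (0:ℝ))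
        (show (0:ℝ) ≤ Z j i ω from hω.1)
        (show (0:ℝ) ≤ 1 - Z j i ω by linarith [hω.2]) (by ring)
      simp only [smul_eq_mul, mul_zero, add_zero, Real.exp_zero] at h
      calc Real.exp ((-1) * Z j i ω) = Real.exp (Z j i ω * (-1)) := by ring_nf
        _ ≤ Z j i ω * Real.exp (-1) + (1 - Z j i ω) * 1 := h
        _ = 1 - (1 - Real.exp (-1)) * Z j i ω := by ring
    have hint_exp : Integrable (fun ω => Real.exp ((-1) * Z j i ω)) ℙ := by
      refine (integrable_const (1:ℝ)).mono'
        (((hmeas j i).const_mul (-1)).exp).aestronglyMeasurable ?_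
      filter_upwards [hbound j i] with ω hω
      rw [Real.norm_eq_abs, abs_of_pos (Real.exp_pos _)]
      calc Real.exp ((-1) * Z j i ω) ≤ Real.exp 0 :=
            Real.exp_le_exp.2 (by nlinarith [hω.1])
        _ = 1 := Real.exp_zero
    have h1 : mgf (Z j i) ℙ (-1) ≤ 1 - (1 - Real.exp (-1)) * μ j := by
      rw [mgf]
      calc ∫ ω, Real.exp ((-1) * Z j i ω) ∂ℙ
          ≤ ∫ ω, (1 - (1 - Real.exp (-1)) * Z j i ω) ∂ℙ :=
            integral_mono_ae hint_exp
              ((integrable_const 1).sub ((hZint j i).const_mul _)) hptwise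
        _ = 1 - (1 - Real.exp (-1)) * μ j := by
            rw [integral_sub (integrable_const 1) ((hZint j i).const_mul _),
              integral_const_mul, hmean j i]; simp
    calc mgf (Z j i) ℙ (-1) ≤ 1 - (1 - Real.exp (-1)) * μ j := h1
      _ ≤ Real.exp (-(1 - Real.exp (-1)) * μ j) := by
          have := Real.add_one_le_exp (-(1 - Real.exp (-1)) * μ j); linarith
      _ ≤ Real.exp (-(μ j)/2) := by
          apply Real.exp_le_exp.2
          nlinarith [hμ0 j]
  -- integral of exp((V/2) * X j) ≤ 1
  have hEexp : ∀ j, ∫ ω, Real.exp (((V:ℝ)/2) * X j ω) ∂ℙ ≤ 1 := by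
    intro j
    have hrw : ∀ ω, Real.exp (((V:ℝ)/2) * X j ω)
        = Real.exp (((V:ℝ)/2) * μ j) * Real.exp ((-1) * (∑ i, Z j i) ω) := by
      intro ω
      rw [← Real.exp_add]
      congr 1
      simp only [hX, Finset.sum_apply]
      field_simp
      ring
    simp_rw [hrw]
    rw [integral_const_mul]
    have hmgfsum : mgf (∑ i, Z j i) ℙ (-1) ≤ Real.exp (-((V:ℝ)/2) * μ j) := by
      rw [(hindep j).mgf_sum (hmeas j) Finset.univ]
      calc ∏ i, mgf (Z j i) ℙ (-1) ≤ ∏ _i : Fin V, Real.exp (-(μ j)/2) :=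
            Finset.prod_le_prod (fun i _ => mgf_nonneg) (fun i _ => hmgf j i)
        _ = Real.exp (-((V:ℝ)/2) * μ j) := by
            rw [Finset.prod_const, ← Real.exp_nat_mul]
            congr 1; simp; ring
    have : ∫ ω, Real.exp ((-1) * (∑ i, Z j i) ω) ∂ℙ = mgf (∑ i, Z j i) ℙ (-1) := rfl
    rw [this]
    calc Real.exp (((V:ℝ)/2) * μ j) * mgf (∑ i, Z j i) ℙ (-1)
        ≤ Real.exp (((V:ℝ)/2) * μ j) * Real.exp (-((V:ℝ)/2) * μ j) :=
          mul_le_mul_of_nonneg_left hmgfsum (Real.exp_pos _).le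
      _ = 1 := by rw [← Real.exp_add]; simp
  -- a.e. bounds on X j
  have hXbd : ∀ᵐ ω ∂ℙ, ∀ j i, Z j i ω ∈ Set.Icc (0:ℝ) 1 := by
    rw [ae_all_iff]; intro j; rw [ae_all_iff]; exact hbound j
  -- measurability of Y
  have hXmeas : ∀ j, Measurable (X j) := fun j =>
    (measurable_const.sub ((Finset.measurable_sum _ (fun i _ => hmeas j i)).const_mul _))
  have hYmeas : Measurable (fun ω => ⨆ j, X j ω) := Measurable.iSup hXmeas
  have hbddA : ∀ ω, BddAbove (Set.range fun j => X j ω) :=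
    fun ω => (Set.finite_range _).bddAbove
  -- Y integrable
  have hYint : Integrable (fun ω => ⨆ j, X j ω) ℙ := by
    refine (integrable_const (2:ℝ)).mono' hYmeas.aestronglyMeasurable ?_
    filter_upwards [hXbd] with ω hω
    rw [Real.norm_eq_abs, abs_le]
    constructor
    · have h1 : X ⟨0, hU⟩ ω ≤ ⨆ j, X j ω := le_ciSup (hbddA ω) _
      have h2 : -2 ≤ X ⟨0, hU⟩ ω := by
        simp only [hX]
        have hs : ∑ i, Z ⟨0,hU⟩ i ω ≤ V := by
          calc ∑ i, Z ⟨0,hU⟩ i ω ≤ ∑ _i : Fin V, (1:ℝ) :=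
              Finset.sum_le_sum (fun i _ => (hω _ i).2)
            _ = V := by simp
        have h3 : (2 / (V:ℝ)) * ∑ i, Z ⟨0,hU⟩ i ω ≤ 2 := by
          rw [div_mul_eq_mul_div, div_le_iff₀ hVR]
          nlinarith
        have := hμ0 ⟨0, hU⟩
        linarith
      linarith
    · apply ciSup_le
      intro j
      simp only [hX]
      have hs : 0 ≤ ∑ i, Z j i ω := Finset.sum_nonneg (fun i _ => (hω j i).1)
      have h3 : 0 ≤ (2 / (V:ℝ)) * ∑ i, Z j i ω := by positivity
      have := hμ1 j
      linarith
  -- exp((V/2) X j) integrable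
  have hexpint : ∀ j, Integrable (fun ω => Real.exp (((V:ℝ)/2) * X j ω)) ℙ := by
    intro j
    refine (integrable_const (Real.exp ((V:ℝ)/2))).mono'
      (((hXmeas j).const_mul _).exp).aestronglyMeasurable ?_
    filter_upwards [hXbd] with ω hω
    rw [Real.norm_eq_abs, abs_of_pos (Real.exp_pos _)]
    apply Real.exp_le_exp.2
    have hs : 0 ≤ ∑ i, Z j i ω := Finset.sum_nonneg (fun i _ => (hω j i).1)
    have h3 : 0 ≤ (2 / (V:ℝ)) * ∑ i, Z j i ω := by positivity
    have hx1 : X j ω ≤ 1 := by simp only [hX]; linarith [hμ1 j]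
    nlinarith [mul_nonneg (by linarith : (0:ℝ) ≤ (V:ℝ)/2) (by linarith : (0:ℝ) ≤ 1 - X j ω)]
  -- pointwise key inequality
  have hkey : ∀ ω, ((V:ℝ)/2) * (⨆ j, X j ω)
      ≤ (Real.log U - 1) + (U:ℝ)⁻¹ * ∑ j, Real.exp (((V:ℝ)/2) * X j ω) := by
    intro ω
    obtain ⟨j0, hj0⟩ := Finite.exists_max (fun j => X j ω)
    have hYeq : (⨆ j, X j ω) = X j0 ω :=
      le_antisymm (ciSup_le hj0) (le_ciSup (hbddA ω) j0)
    rw [hYeq]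
    have h1 : ((V:ℝ)/2) * X j0 ω - Real.log U
        ≤ Real.exp (((V:ℝ)/2) * X j0 ω - Real.log U) - 1 := by
      have := Real.add_one_le_exp (((V:ℝ)/2) * X j0 ω - Real.log U); linarith
    have h2 : Real.exp (((V:ℝ)/2) * X j0 ω - Real.log U)
        = (U:ℝ)⁻¹ * Real.exp (((V:ℝ)/2) * X j0 ω) := by
      rw [Real.exp_sub, Real.exp_log (by linarith : (0:ℝ) < U)]
      ring
    have h3 : Real.exp (((V:ℝ)/2) * X j0 ω) ≤ ∑ j, Real.exp (((V:ℝ)/2) * X j ω) :=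
      Finset.single_le_sum (f := fun j => Real.exp (((V:ℝ)/2) * X j ω))
        (fun j _ => (Real.exp_pos _).le) (Finset.mem_univ j0)
    have hU' : (0:ℝ) < (U:ℝ)⁻¹ := by positivity
    nlinarith
  -- integrate
  have hInt : ((V:ℝ)/2) * ∫ ω, (⨆ j, X j ω) ∂ℙ ≤ Real.log U := by
    have lhs_eq : ∫ ω, ((V:ℝ)/2) * (⨆ j, X j ω) ∂ℙ
        = ((V:ℝ)/2) * ∫ ω, (⨆ j, X j ω) ∂ℙ := integral_const_mul _ _
    have rhs_int : Integrable (fun ω => (Real.log U - 1)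
        + (U:ℝ)⁻¹ * ∑ j, Real.exp (((V:ℝ)/2) * X j ω)) ℙ :=
      (integrable_const _).add ((integrable_finset_sum _ (fun j _ => hexpint j)).const_mul _)
    have step : ∫ ω, ((V:ℝ)/2) * (⨆ j, X j ω) ∂ℙ
        ≤ ∫ ω, ((Real.log U - 1) + (U:ℝ)⁻¹ * ∑ j, Real.exp (((V:ℝ)/2) * X j ω)) ∂ℙ :=
      integral_mono (hYint.const_mul _) rhs_int hkey
    rw [lhs_eq] at step
    have rhs_eq : ∫ ω, ((Real.log U - 1) + (U:ℝ)⁻¹ * ∑ j, Real.exp (((V:ℝ)/2) * X j ω)) ∂ℙ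
        = (Real.log U - 1) + (U:ℝ)⁻¹ * ∑ j, ∫ ω, Real.exp (((V:ℝ)/2) * X j ω) ∂ℙ := by
      rw [integral_add (integrable_const _)
        ((integrable_finset_sum _ (fun j _ => hexpint j)).const_mul _),
        integral_const, integral_const_mul,
        integral_finset_sum _ (fun j _ => hexpint j)]
      simp
    rw [rhs_eq] at step
    have hsum : ∑ j, ∫ ω, Real.exp (((V:ℝ)/2) * X j ω) ∂ℙ ≤ (U:ℝ) := by
      calc ∑ j, ∫ ω, Real.exp (((V:ℝ)/2) * X j ω) ∂ℙ ≤ ∑ _j : Fin U, (1:ℝ) :=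
          Finset.sum_le_sum (fun j _ => hEexp j)
        _ = U := by simp
    have hU' : (0:ℝ) < (U:ℝ)⁻¹ := by positivity
    have : (U:ℝ)⁻¹ * ∑ j, ∫ ω, Real.exp (((V:ℝ)/2) * X j ω) ∂ℙ ≤ 1 := by
      rw [inv_mul_le_iff₀ (by linarith : (0:ℝ) < U)]
      linarith
    linarith
  -- finish
  have hlogU : 0 ≤ Real.log U := Real.log_nonneg hUR
  have hIY : ∫ ω, (⨆ j, X j ω) ∂ℙ ≤ 2 * Real.log U / V := by
    rw [le_div_iff₀ hVR]
    nlinarith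
  calc ∫ ω, (⨆ j, (μ j - (2 / (V : ℝ)) * ∑ i, Z j i ω)) ∂ℙ
      = ∫ ω, (⨆ j, X j ω) ∂ℙ := rfl
    _ ≤ 2 * Real.log U / V := hIY
    _ ≤ 8 * Real.logb 2 (U : ℝ) / (V : ℝ) := by
        rw [div_le_div_iff₀ hVR hVR, Real.logb]
        have hlog2 : (0:ℝ) < Real.log 2 := Real.log_pos (by norm_num)
        have hlog2' : Real.log 2 ≤ 1 := by
          rw [← Real.log_exp 1]
          apply Real.log_le_log (by norm_num)
          have := Real.add_one_le_exp (1:ℝ); linarith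
        rw [div_eq_mul_inv]
        have hinv : (1:ℝ) ≤ (Real.log 2)⁻¹ := by
          rw [le_inv_comm₀ (by norm_num) hlog2]; simpa using hlog2'
        have hLV : (0:ℝ) ≤ Real.log ↑U * ↑V := mul_nonneg hlogU hVR.le
        have hL : Real.log ↑U * ↑V ≤ (Real.log ↑U * (Real.log 2)⁻¹) * ↑V := by
          nlinarith
        linarith
end
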